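/- arXiv:1309.4935 — 5 statements merged into one kernel-verified Lean document; each statement's English description precedes it below -/
import Mathlib

section
/- Let T > 0, let k : [0,T] → ℝ^d be càdlàg, and let D be a dense subset of [0,T] with 0 ∈ D and T ∈ D. Let k^n : [0,T] → ℝ^d, n ∈ ℕ, satisfy k^n(t) → k(t) as n → ∞ for every t ∈ D. Then ↕k↕_T ≤ liminf_{n → ∞} ↕k^n↕_T, where the total variations are taken in [0,∞]. -/
open Filter Topology

/-- A function `x : ℝ → E` is càdlàg on `[0,T]` if it is right-continuous at every
point of `[0,T)` and has a left limit at every point of `(0,T]`. -/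
def Cadlag {E : Type*} [TopologicalSpace E] (T : ℝ) (x : ℝ → E) : Prop :=
  (∀ t ∈ Set.Ico (0 : ℝ) T, Tendsto x (nhdsWithin t (Set.Ioc t T)) (nhds (x t))) ∧
  (∀ t ∈ Set.Ioc (0 : ℝ) T, ∃ L, Tendsto x (nhdsWithin t (Set.Ico 0 t)) (nhds L))

open Set

lemma acc_right (T : ℝ) (D : Set ℝ) (hDdense : Set.Icc (0 : ℝ) T ⊆ closure D)
    (t : ℝ) (ht : t ∈ Set.Ico 0 T) : (nhdsWithin t (D ∩ Set.Ioc t T)).NeBot := by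
  rw [← mem_closure_iff_nhdsWithin_neBot, mem_closure_iff]
  intro o ho hto
  obtain ⟨a, ha, hball⟩ := Metric.isOpen_iff.mp ho t hto
  set b := min a (T - t) with hb
  have hbpos : 0 < b := lt_min ha (by linarith [ht.2])
  have hm : t + b/2 ∈ Set.Icc (0:ℝ) T := by
    constructor
    · linarith [ht.1]
    · have : b ≤ T - t := min_le_right _ _
      linarith
  have := hDdense hm
  rw [mem_closure_iff] at this
  obtain ⟨p, hpo, hpD⟩ := this (Set.Ioo t (t + b)) isOpen_Ioo ⟨by linarith, by linarith⟩
  refine ⟨p, ?_, hpD, hpo.1, ?_⟩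
  · apply hball
    rw [Metric.mem_ball, Real.dist_eq, abs_lt]
    constructor <;>
      [linarith [hpo.1];
       exact lt_of_lt_of_le (by linarith [hpo.2]) (by linarith [min_le_left a (T-t)])]
  · have : b ≤ T - t := min_le_right _ _
    linarith [hpo.2]

lemma approx_pt {d : ℕ} (T : ℝ) (k : ℝ → EuclideanSpace ℝ (Fin d)) (hk : Cadlag T k)
    (D : Set ℝ) (hDdense : Set.Icc (0 : ℝ) T ⊆ closure D) (hDT : T ∈ D)
    {η : ENNReal} (hη : 0 < η) {δ : ℝ} (hδ : 0 < δ) (t : ℝ) (ht : t ∈ Set.Icc 0 T) :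
    ∃ s, s ∈ D ∧ t ≤ s ∧ s < t + δ ∧ edist (k s) (k t) ≤ η := by
  rcases eq_or_lt_of_le ht.2 with hTt | hTt
  · exact ⟨T, hDT, ht.2, by rw [hTt]; linarith, by rw [hTt]; simp⟩
  have hneb := acc_right T D hDdense t ⟨ht.1, hTt⟩
  have htend := hk.1 t ⟨ht.1, hTt⟩
  have h1 : k ⁻¹' (EMetric.ball (k t) η) ∈ nhdsWithin t (Set.Ioc t T) :=
    htend (EMetric.ball_mem_nhds _ hη)
  have h2 : Set.Iio (t + δ) ∈ nhdsWithin t (Set.Ioc t T) :=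
    nhdsWithin_le_nhds (Iio_mem_nhds (by linarith))
  have hle : nhdsWithin t (D ∩ Set.Ioc t T) ≤ nhdsWithin t (Set.Ioc t T) :=
    nhdsWithin_mono _ inter_subset_right
  have h3 : D ∩ Set.Ioc t T ∈ nhdsWithin t (D ∩ Set.Ioc t T) := self_mem_nhdsWithin
  obtain ⟨s, hs⟩ := Filter.nonempty_of_mem
    (Filter.inter_mem (Filter.inter_mem (hle h1) (hle h2)) h3)
  exact ⟨s, hs.2.1, (hs.2.2.1).le, hs.1.2, (EMetric.mem_ball.mp hs.1.1).le⟩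

lemma key {d : ℕ} (T : ℝ) (hT : 0 < T) (k : ℝ → EuclideanSpace ℝ (Fin d)) (hk : Cadlag T k)
    (D : Set ℝ) (hDsub : D ⊆ Set.Icc 0 T) (hDdense : Set.Icc (0 : ℝ) T ⊆ closure D)
    (hDT : T ∈ D) :
    eVariationOn k (Set.Icc 0 T) ≤ eVariationOn k D := by
  rw [eVariationOn]
  apply iSup_le
  rintro ⟨n, u, hu, us⟩
  dsimp only
  -- gap size
  set G : Finset ℕ := (Finset.range n).filter (fun i => u i < u (i+1)) with hG
  set δ : ℝ := if h : G.Nonempty then G.inf' h (fun i => u (i+1) - u i) else 1 with hδdef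
  have hδpos : 0 < δ := by
    rw [hδdef]
    split_ifs with h
    · rw [Finset.lt_inf'_iff]
      intro i hi
      have := (Finset.mem_filter.mp hi).2
      linarith
    · exact one_pos
  have hδle : ∀ i, i < n → u i < u (i+1) → δ ≤ u (i+1) - u i := by
    intro i hin hi
    have hmem : i ∈ G := Finset.mem_filter.mpr ⟨Finset.mem_range.mpr hin, hi⟩
    rw [hδdef, dif_pos ⟨i, hmem⟩]
    exact Finset.inf'_le _ hmem
  -- clamp u
  set u' : ℕ → ℝ := fun i => u (min i n) with hu'def
  have hu' : Monotone u' := fun i j hij => hu (min_le_min_right n hij)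
  have us' : ∀ i, u' i ∈ Set.Icc (0:ℝ) T := fun i => us _
  apply ENNReal.le_of_forall_pos_le_add
  intro ε hε _
  set η : ENNReal := ((ε : ENNReal) / 2) / (n + 1) with hηdef
  have hη : 0 < η := by
    apply ENNReal.div_pos _ (by simp)
    exact ENNReal.div_ne_zero.mpr ⟨by exact_mod_cast hε.ne', by simp⟩
  have hnη : (n : ENNReal) * η ≤ (ε : ENNReal) / 2 := by
    calc (n : ENNReal) * η ≤ (n + 1 : ENNReal) * η := by
          apply mul_le_mul_left
          exact le_self_add
      _ = (ε : ENNReal) / 2 := ENNReal.mul_div_cancel (by exact (Nat.cast_add_one_pos n).ne') (by simp)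
  have hex : ∀ t : ℝ, ∃ s, t ∈ Set.Icc (0:ℝ) T →
      s ∈ D ∧ t ≤ s ∧ s < t + δ ∧ edist (k s) (k t) ≤ η := by
    intro t
    by_cases h : t ∈ Set.Icc (0:ℝ) T
    · obtain ⟨s, hs⟩ := approx_pt T k hk D hDdense hDT hη hδpos t h
      exact ⟨s, fun _ => hs⟩
    · exact ⟨t, fun h' => absurd h' h⟩
  choose w hw using hex
  set v : ℕ → ℝ := fun i => w (u' i) with hvdef
  have hvD : ∀ i, v i ∈ D := fun i => (hw _ (us' i)).1
  have hvmono : Monotone v := by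
    apply monotone_nat_of_le_succ
    intro i
    rcases eq_or_lt_of_le (hu' (Nat.le_succ i)) with heq | hlt
    · simp [hvdef, heq]
    · have hin : i < n := by
        by_contra hin
        push_neg at hin
        have : min i n = min (i+1) n := by
          rw [min_eq_right hin, min_eq_right (le_trans hin (Nat.le_succ i))]
        exact absurd (congrArg u this) hlt.ne
      have h1 : u' i = u i := by simp [hu'def, min_eq_left hin.le]
      have h2 : u' (i+1) = u (i+1) := by simp [hu'def, min_eq_left (show i + 1 ≤ n from hin)]
      have hd := hδle i hin (by rwa [h1, h2] at hlt)
      have hlt1 : v i < u' i + δ := (hw _ (us' i)).2.2.1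
      have hle2 : u' (i+1) ≤ v (i+1) := (hw _ (us' (i+1))).2.1
      have : u' i + δ ≤ u' (i+1) := by rw [h1, h2]; linarith
      linarith
  have herr : ∀ i, edist (k (u' i)) (k (v i)) ≤ η := by
    intro i
    rw [edist_comm]
    exact (hw _ (us' i)).2.2.2
  calc ∑ i ∈ Finset.range n, edist (k (u (i + 1))) (k (u i))
      = ∑ i ∈ Finset.range n, edist (k (u' (i + 1))) (k (u' i)) := by
        apply Finset.sum_congr rfl
        intro i hi
        have hin := Finset.mem_range.mp hi
        simp [hu'def, min_eq_left hin.le, min_eq_left (show i + 1 ≤ n from hin)]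
    _ ≤ ∑ i ∈ Finset.range n, (edist (k (u' (i + 1))) (k (v (i + 1))) +
          edist (k (v (i + 1))) (k (v i)) + edist (k (v i)) (k (u' i))) :=
        Finset.sum_le_sum fun i _ => edist_triangle4 _ _ _ _
    _ = (∑ i ∈ Finset.range n, (edist (k (u' (i + 1))) (k (v (i + 1))) +
          edist (k (v (i + 1))) (k (v i)))) +
        ∑ i ∈ Finset.range n, edist (k (v i)) (k (u' i)) := Finset.sum_add_distrib
    _ = (∑ i ∈ Finset.range n, edist (k (u' (i + 1))) (k (v (i + 1)))) +
        (∑ i ∈ Finset.range n, edist (k (v (i + 1))) (k (v i))) +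
        ∑ i ∈ Finset.range n, edist (k (v i)) (k (u' i)) := by rw [Finset.sum_add_distrib]
    _ ≤ (n : ENNReal) * η + eVariationOn k D + (n : ENNReal) * η := by
        gcongr with i hi
        · calc ∑ i ∈ Finset.range n, edist (k (u' (i + 1))) (k (v (i + 1))) ≤
              ∑ _i ∈ Finset.range n, η := Finset.sum_le_sum fun i _ => herr (i+1)
            _ = (n : ENNReal) * η := by rw [Finset.sum_const, Finset.card_range, nsmul_eq_mul]
        · exact eVariationOn.sum_le (f := k) (n := n) hvmono hvD
        · calc ∑ i ∈ Finset.range n, edist (k (v i)) (k (u' i)) ≤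
              ∑ _i ∈ Finset.range n, η := Finset.sum_le_sum fun i _ => by
                rw [edist_comm]; exact herr i
            _ = (n : ENNReal) * η := by rw [Finset.sum_const, Finset.card_range, nsmul_eq_mul]
    _ ≤ (ε : ENNReal) / 2 + eVariationOn k D + (ε : ENNReal) / 2 := by gcongr
    _ = eVariationOn k D + ε := by
        rw [add_comm ((ε : ENNReal)/2) (eVariationOn k D), add_assoc, ENNReal.add_halves]


/-- Lower semicontinuity of the total variation (taken in `[0,∞]`) for a càdlàg limit,
under pointwise convergence on a dense subset `D` of `[0,T]` containing `0` and `T`. -/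
theorem eVariationOn_le_liminf_of_pointwise_on_dense {d : ℕ} (T : ℝ) (hT : 0 < T)
    (k : ℝ → EuclideanSpace ℝ (Fin d)) (hk : Cadlag T k)
    (D : Set ℝ) (hDsub : D ⊆ Set.Icc 0 T) (hDdense : Set.Icc (0 : ℝ) T ⊆ closure D)
    (hD0 : (0 : ℝ) ∈ D) (hDT : T ∈ D)
    (kn : ℕ → ℝ → EuclideanSpace ℝ (Fin d))
    (hconv : ∀ t ∈ D, Tendsto (fun n => kn n t) atTop (nhds (k t))) :
    eVariationOn k (Set.Icc 0 T) ≤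
      Filter.liminf (fun n => eVariationOn (kn n) (Set.Icc 0 T)) atTop := by
  refine (key T hT k hk D hDsub hDdense hDT).trans ?_
  apply le_of_forall_lt
  intro c hc
  obtain ⟨c', hcc', hc'⟩ := exists_between hc
  have hev : ∀ᶠ n in atTop, c' < eVariationOn (kn n) D :=
    eVariationOn.lowerSemicontinuous_aux (fun x hx => hconv x hx) hc'
  have hle : c' ≤ Filter.liminf (fun n => eVariationOn (kn n) (Set.Icc 0 T)) atTop := by
    apply Filter.le_liminf_of_le (by isBoundedDefault)
    exact hev.mono fun n hn => hn.le.trans (eVariationOn.mono _ hDsub)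
  exact lt_of_lt_of_le hcc' hle
end

section
/- Let T > 0, let k be a Stieltjes function with associated Lebesgue–Stieltjes measure μ_k, and let x : [0,T] → ℝ be càdlàg, with left limits denoted x(r−) (and x(0−) := x(0)). Then for every t ∈ (0,T], ∫_{(0,t]} x(r) μ_k(dr) = ∫_{(0,t]} x(r−) μ_k(dr) + Σ_{r ∈ (0,t]} (x(r) − x(r−)) (k(r) − k(r−)), where the sum has at most countably many nonzero terms and is absolutely convergent. -/
open Filter Topology MeasureTheory

lemma nhds_Ico_eq_Iio {u : ℝ} (hu : 0 < u) :
    𝓝[Set.Ico (0:ℝ) u] u = 𝓝[Set.Iio u] u := by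
  rw [show Set.Ico (0:ℝ) u = Set.Iio u ∩ Set.Ici 0 by
    ext r; simp [Set.mem_Ico, and_comm]]
  exact nhdsWithin_inter_of_mem' (mem_nhdsWithin_of_mem_nhds (Ici_mem_nhds hu))

lemma measurable_comp_countable_range {h : ℝ → ℝ} (hm : Measurable h)
    (hc : (Set.range h).Countable) (x : ℝ → ℝ) : Measurable fun r => x (h r) := by
  intro s _
  have : (fun r => x (h r)) ⁻¹' s = h ⁻¹' (Set.range h ∩ x ⁻¹' s) := by
    ext r
    simp only [Set.mem_preimage, Set.mem_inter_iff, Set.mem_range]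
    exact ⟨fun hr => ⟨⟨r, rfl⟩, hr⟩, fun hr => hr.2⟩
  rw [this]
  exact hm ((hc.mono Set.inter_subset_left).measurableSet)

lemma measurable_of_countable_support {f : ℝ → ℝ} {D : Set ℝ} (hD : D.Countable)
    (h : ∀ r, r ∉ D → f r = 0) : Measurable f := by
  intro s _
  by_cases h0 : (0:ℝ) ∈ s
  · have : f ⁻¹' s = (D ∩ f ⁻¹' s) ∪ Dᶜ := by
      ext r
      by_cases hr : r ∈ D <;> simp [hr, h r, h0]
    rw [this]
    exact ((hD.mono Set.inter_subset_left).measurableSet).union hD.measurableSet.compl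
  · have hsub : f ⁻¹' s ⊆ D := by
      intro r hr
      by_contra hrD
      rw [Set.mem_preimage, h r hrD] at hr
      exact h0 hr
    exact (hD.mono hsub).measurableSet


lemma cadlag_loc {T : ℝ} {x xl : ℝ → ℝ} (hx : Cadlag T x)
    (hxl : ∀ r ∈ Set.Ioc (0 : ℝ) T, Tendsto x (nhdsWithin r (Set.Ico 0 r)) (nhds (xl r)))
    {s : ℝ} (hs : s ∈ Set.Icc (0:ℝ) T) {ε : ℝ} (hε : 0 < ε) :
    ∀ᶠ u in 𝓝 s, (u ∈ Set.Ioc s T → |x u - x s| < ε) ∧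
      (u ∈ Set.Ico 0 s → |x u - xl s| < ε) := by
  have hright : ∀ᶠ u in 𝓝 s, u ∈ Set.Ioc s T → |x u - x s| < ε := by
    rcases eq_or_lt_of_le hs.2 with rfl | hsT
    · exact Eventually.of_forall fun u hu => absurd (hu.1.trans_le hu.2) (lt_irrefl _)
    · have h1 : ∀ᶠ u in 𝓝[Set.Ioc s T] s, |x u - x s| < ε := by
        have := (hx.1 s ⟨hs.1, hsT⟩).eventually (Metric.ball_mem_nhds (x s) hε)
        filter_upwards [this] with u hu
        simpa [Real.dist_eq] using hu
      exact (eventually_nhdsWithin_iff).1 h1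
  have hleft : ∀ᶠ u in 𝓝 s, u ∈ Set.Ico 0 s → |x u - xl s| < ε := by
    rcases eq_or_lt_of_le hs.1 with rfl | hs0
    · exact Eventually.of_forall fun u hu => absurd (hu.1.trans_lt hu.2) (lt_irrefl _)
    · have h1 : ∀ᶠ u in 𝓝[Set.Ico 0 s] s, |x u - xl s| < ε := by
        have := (hxl s ⟨hs0, hs.2⟩).eventually (Metric.ball_mem_nhds (xl s) hε)
        filter_upwards [this] with u hu
        simpa [Real.dist_eq] using hu
      exact (eventually_nhdsWithin_iff).1 h1
  exact hright.and hleft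

lemma cadlag_bound {T : ℝ} (hT : 0 < T) {x xl : ℝ → ℝ} (hx : Cadlag T x)
    (hxl : ∀ r ∈ Set.Ioc (0 : ℝ) T, Tendsto x (nhdsWithin r (Set.Ico 0 r)) (nhds (xl r))) :
    ∃ M : ℝ, 0 ≤ M ∧ ∀ r ∈ Set.Icc (0:ℝ) T, |x r| ≤ M := by
  set C : ℝ → ℝ := fun s => max |x s| (max (|x s| + 1) (|xl s| + 1)) with hC
  set U : ∀ s ∈ Set.Icc (0:ℝ) T, Set ℝ := fun s _ =>
    {u | (u ∈ Set.Ioc s T → |x u - x s| < 1) ∧ (u ∈ Set.Ico 0 s → |x u - xl s| < 1)} with hU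
  have hUmem : ∀ s (hs : s ∈ Set.Icc (0:ℝ) T), U s hs ∈ 𝓝 s := fun s hs =>
    cadlag_loc hx hxl hs one_pos
  obtain ⟨F, hF⟩ := (isCompact_Icc (a := (0:ℝ)) (b := T)).elim_nhds_subcover' U hUmem
  have hFne : F.Nonempty := by
    have h0 : (0:ℝ) ∈ Set.Icc (0:ℝ) T := ⟨le_rfl, hT.le⟩
    obtain ⟨s, hsF, -⟩ := Set.mem_iUnion₂.1 (hF h0)
    exact ⟨s, hsF⟩
  refine ⟨F.sup' hFne (fun s => C s), ?_, ?_⟩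
  · obtain ⟨s, hsF⟩ := hFne
    calc (0:ℝ) ≤ C s := le_max_of_le_left (abs_nonneg _)
    _ ≤ _ := Finset.le_sup' (fun s : Set.Icc (0:ℝ) T => C ↑s) hsF
  · intro r hr
    obtain ⟨s, hsF, hrU⟩ := Set.mem_iUnion₂.1 (hF hr)
    have hbound : |x r| ≤ C ↑s := by
      rcases lt_trichotomy r (s : ℝ) with h | h | h
      · have := hrU.2 ⟨hr.1, h⟩
        have : |x r| ≤ |xl ↑s| + 1 := by
          have := abs_sub_abs_le_abs_sub (x r) (xl ↑s)
          linarith [this, hrU.2 ⟨hr.1, h⟩]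
        exact this.trans (le_max_of_le_right (le_max_right _ _))
      · rw [h]; exact le_max_left _ _
      · have : |x r| ≤ |x ↑s| + 1 := by
          have := abs_sub_abs_le_abs_sub (x r) (x ↑s)
          linarith [this, hrU.1 ⟨h, hr.2⟩]
        exact this.trans (le_max_of_le_right (le_max_left _ _))
    exact hbound.trans (Finset.le_sup' (fun s : Set.Icc (0:ℝ) T => C ↑s) hsF)

lemma cadlag_jumps_countable {T : ℝ} (hT : 0 < T) {x xl : ℝ → ℝ} (hx : Cadlag T x)
    (hxl : ∀ r ∈ Set.Ioc (0 : ℝ) T, Tendsto x (𝓝[Set.Ico 0 r] r) (𝓝 (xl r))) :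
    {r ∈ Set.Ioc (0:ℝ) T | x r ≠ xl r}.Countable := by
  have key : ∀ ε : ℝ, 0 < ε → {r ∈ Set.Ioc (0:ℝ) T | ε ≤ |x r - xl r|}.Finite := by
    intro ε hε
    have hloc : ∀ s ∈ Set.Icc (0:ℝ) T, ∃ δ > 0, ∀ u, dist u s < δ/2 → u ≠ s →
        u ∈ Set.Ioc (0:ℝ) T → |x u - xl u| < ε := by
      intro s hs
      obtain ⟨δ, hδ0, hδ⟩ := Metric.eventually_nhds_iff.1
        (cadlag_loc hx hxl hs (by positivity : (0:ℝ) < ε/3))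
      refine ⟨δ, hδ0, ?_⟩
      intro u hu hne huT
      rw [Real.dist_eq, abs_lt] at hu
      haveI : (𝓝[Set.Ico (0:ℝ) u] u).NeBot := by
        rw [nhds_Ico_eq_Iio huT.1]; infer_instance
      rcases lt_or_gt_of_ne hne with hlt | hgt
      · -- u < s
        have hu1 : u ∈ Set.Ico (0:ℝ) s := ⟨huT.1.le, hlt⟩
        have h1 : |x u - xl s| < ε/3 :=
          (hδ (by rw [Real.dist_eq, abs_lt]; constructor <;> linarith)).2 hu1
        have h2 : |xl u - xl s| ≤ ε/3 := by
          have hten : Tendsto (fun v => |x v - xl s|) (𝓝[Set.Ico (0:ℝ) u] u)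
              (𝓝 |xl u - xl s|) := ((hxl u huT).sub_const _).abs
          refine le_of_tendsto hten ?_
          have hmem : ∀ᶠ v in 𝓝[Set.Ico (0:ℝ) u] u, v ∈ Set.Ico (0:ℝ) u :=
            eventually_mem_nhdsWithin
          have hgt' : ∀ᶠ v in 𝓝[Set.Ico (0:ℝ) u] u, s - δ < v :=
            (eventually_gt_nhds (by linarith : s - δ < u)).filter_mono nhdsWithin_le_nhds
          filter_upwards [hmem, hgt'] with v hv1 hv2
          exact ((hδ (by rw [Real.dist_eq, abs_lt]; constructor <;>
            [linarith [hv1.2]; linarith [hv1.2.trans hlt]])).2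
            ⟨hv1.1, hv1.2.trans hlt⟩).le
        calc |x u - xl u| ≤ |x u - xl s| + |xl s - xl u| := abs_sub_le _ _ _
        _ < ε := by rw [abs_sub_comm (xl s)] ; linarith
      · -- u > s
        have hu1 : u ∈ Set.Ioc s T := ⟨hgt, huT.2⟩
        have h1 : |x u - x s| < ε/3 :=
          (hδ (by rw [Real.dist_eq, abs_lt]; constructor <;> linarith)).1 hu1
        have h2 : |xl u - x s| ≤ ε/3 := by
          have hten : Tendsto (fun v => |x v - x s|) (𝓝[Set.Ico (0:ℝ) u] u)
              (𝓝 |xl u - x s|) := ((hxl u huT).sub_const _).abs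
          refine le_of_tendsto hten ?_
          have hmem : ∀ᶠ v in 𝓝[Set.Ico (0:ℝ) u] u, v ∈ Set.Ico (0:ℝ) u :=
            eventually_mem_nhdsWithin
          have hgt' : ∀ᶠ v in 𝓝[Set.Ico (0:ℝ) u] u, s < v :=
            (eventually_gt_nhds hgt).filter_mono nhdsWithin_le_nhds
          filter_upwards [hmem, hgt'] with v hv1 hv2
          exact ((hδ (by rw [Real.dist_eq, abs_lt]; constructor <;> linarith [hv1.2])).1
            ⟨hv2, hv1.2.le.trans huT.2⟩).le
        calc |x u - xl u| ≤ |x u - x s| + |x s - xl u| := abs_sub_le _ _ _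
        _ < ε := by rw [abs_sub_comm (x s)]; linarith
    choose! δ hδ0 hδ using hloc
    obtain ⟨F, hF⟩ := (isCompact_Icc (a:=(0:ℝ)) (b:=T)).elim_nhds_subcover'
      (fun s hs => Metric.ball s (δ s / 2))
      (fun s hs => Metric.ball_mem_nhds s (by linarith [hδ0 s hs]))
    refine Set.Finite.subset (Set.Finite.image (fun s : Set.Icc (0:ℝ) T => (s:ℝ)) F.finite_toSet) ?_
    intro r hr
    have hrIcc : r ∈ Set.Icc (0:ℝ) T := ⟨hr.1.1.le, hr.1.2⟩
    obtain ⟨s, hsF, hrB⟩ := Set.mem_iUnion₂.1 (hF hrIcc)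
    have heq : r = ↑s := by
      by_contra hne
      exact absurd hr.2 (not_le.2 (hδ ↑s s.2 r (Metric.mem_ball.1 hrB) hne hr.1))
    exact ⟨s, hsF, heq.symm⟩
  have hsub : {r ∈ Set.Ioc (0:ℝ) T | x r ≠ xl r} ⊆
      ⋃ n : ℕ, {r ∈ Set.Ioc (0:ℝ) T | 1/((n:ℝ)+1) ≤ |x r - xl r|} := by
    intro r hr
    have hpos : 0 < |x r - xl r| := abs_pos.2 (sub_ne_zero.2 hr.2)
    obtain ⟨n, hn⟩ := exists_nat_one_div_lt hpos
    exact Set.mem_iUnion.2 ⟨n, hr.1, hn.le⟩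
  exact Set.Countable.mono hsub
    (Set.countable_iUnion fun n => (key _ (by positivity)).countable)

lemma cadlag_aesm {T : ℝ} {x : ℝ → ℝ} (hx : Cadlag T x) {t : ℝ} (ht : t ∈ Set.Ioc (0:ℝ) T)
    (μ : Measure ℝ) :
    AEStronglyMeasurable x (μ.restrict (Set.Ioc 0 t)) := by
  set h : ℕ → ℝ → ℝ := fun n r => min t ((↑⌊r * 2^n⌋ + 1) / 2^n) with hh
  have hmeas : ∀ n, Measurable fun r => x (h n r) := by
    intro n
    apply measurable_comp_countable_range
    · have h1 : Measurable fun r : ℝ => ⌊r * 2^n⌋ :=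
        Int.measurable_floor.comp (measurable_id.mul_const _)
      exact (Measurable.of_discrete (f := fun z : ℤ => min t (((z:ℝ)+1)/2^n))).comp h1
    · have hsub : Set.range (h n) ⊆ Set.range (fun z : ℤ => min t (((z:ℝ)+1)/2^n)) := by
        rintro _ ⟨r, rfl⟩; exact ⟨⌊r * 2^n⌋, rfl⟩
      exact (Set.countable_range _).mono hsub
  have hp : ∀ n : ℕ, (0:ℝ) < 2^n := fun n => by positivity
  have hlt : ∀ (n : ℕ) (r : ℝ), r < ((⌊r * 2^n⌋ : ℝ) + 1) / 2^n := by
    intro n r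
    rw [lt_div_iff₀ (hp n)]
    exact Int.lt_floor_add_one (r * 2^n)
  have htend : ∀ r ∈ Set.Ioc (0:ℝ) t, Tendsto (fun n => x (h n r)) atTop (𝓝 (x r)) := by
    intro r hr
    rcases eq_or_lt_of_le hr.2 with rfl | hrt
    · have heq : ∀ n, h n r = r := fun n => min_eq_left (hlt n r).le
      simp only [heq]
      exact tendsto_const_nhds
    · have hub : ∀ n, h n r ∈ Set.Ioc r T :=
        fun n => ⟨lt_min hrt (hlt n r), (min_le_left _ _).trans ht.2⟩
      have hle : ∀ n, h n r ≤ r + (1/2:ℝ)^n := by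
        intro n
        have h1 : ((1:ℝ)/2)^n * 2^n = 1 := by rw [← mul_pow]; norm_num
        have h2 : ((⌊r * 2^n⌋ : ℝ) + 1) / 2^n ≤ r + (1/2:ℝ)^n := by
          rw [div_le_iff₀ (hp n), add_mul]
          have := Int.floor_le (r * 2^n)
          linarith
        exact (min_le_right _ _).trans h2
      have htn : Tendsto (fun n => h n r) atTop (𝓝 r) := by
        have hupper : Tendsto (fun n => r + (1/2:ℝ)^n) atTop (𝓝 r) := by
          have := tendsto_pow_atTop_nhds_zero_of_lt_one
            (by norm_num : (0:ℝ) ≤ 1/2) (by norm_num : (1/2:ℝ) < 1)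
          simpa using tendsto_const_nhds.add this
        exact tendsto_of_tendsto_of_tendsto_of_le_of_le tendsto_const_nhds hupper
          (fun n => (hub n).1.le) hle
      have htn' : Tendsto (fun n => h n r) atTop (𝓝[Set.Ioc r T] r) :=
        tendsto_nhdsWithin_of_tendsto_nhds_of_eventually_within _ htn
          (Eventually.of_forall hub)
      exact (hx.1 r ⟨hr.1.le, hrt.trans_le ht.2⟩).comp htn'
  exact aestronglyMeasurable_of_tendsto_ae atTop
    (fun n => (hmeas n).aestronglyMeasurable)
    ((ae_restrict_iff' measurableSet_Ioc).2 (Filter.Eventually.of_forall htend))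

/-- For a Stieltjes function `k` with Lebesgue–Stieltjes measure `k.measure`, and a
càdlàg `x : [0,T] → ℝ` with left limits `xl`, for every `t ∈ (0,T]` one has
`∫_{(0,t]} x dk = ∫_{(0,t]} x(·⁻) dk + Σ_{r ∈ (0,t]} (x r - x (r⁻)) (k r - k (r⁻))`,
where the sum has countably many nonzero terms and is absolutely convergent. -/
theorem stieltjes_integral_left_limits_jump_formula (T : ℝ) (hT : 0 < T)
    (k : StieltjesFunction ℝ) (x xl : ℝ → ℝ) (hx : Cadlag T x)
    (hxl0 : xl 0 = x 0)
    (hxl : ∀ r ∈ Set.Ioc (0 : ℝ) T, Tendsto x (nhdsWithin r (Set.Ico 0 r)) (nhds (xl r)))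
    (t : ℝ) (ht : t ∈ Set.Ioc (0 : ℝ) T) :
    {r ∈ Set.Ioc (0 : ℝ) t | (x r - xl r) * (k r - Function.leftLim k r) ≠ 0}.Countable ∧
    Summable (fun r : Set.Ioc (0 : ℝ) t =>
      |(x r - xl r) * (k r - Function.leftLim k r)|) ∧
    (∫ r in Set.Ioc (0 : ℝ) t, x r ∂k.measure) =
      (∫ r in Set.Ioc (0 : ℝ) t, xl r ∂k.measure) +
        ∑' r : Set.Ioc (0 : ℝ) t, (x r - xl r) * (k r - Function.leftLim k r) := by
  obtain ⟨ht0, htT⟩ := ht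
  set μ := k.measure with hμ
  set S := Set.Ioc (0:ℝ) t with hS
  set g : ℝ → ℝ := fun r => (x r - xl r) * (k r - Function.leftLim k r) with hg
  have hSmeas : MeasurableSet S := measurableSet_Ioc
  have hSsub : S ⊆ Set.Ioc (0:ℝ) T := Set.Ioc_subset_Ioc le_rfl htT
  obtain ⟨M, hM0, hM⟩ := cadlag_bound hT hx hxl
  have hMxl : ∀ r ∈ Set.Ioc (0:ℝ) T, |xl r| ≤ M := by
    intro r hr
    haveI : (𝓝[Set.Ico (0:ℝ) r] r).NeBot := by rw [nhds_Ico_eq_Iio hr.1]; infer_instance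
    refine le_of_tendsto ((hxl r hr).abs) ?_
    filter_upwards [eventually_mem_nhdsWithin] with v hv
    exact hM v ⟨hv.1, hv.2.le.trans hr.2⟩
  have hD : {r ∈ S | x r ≠ xl r}.Countable :=
    (cadlag_jumps_countable hT hx hxl).mono (fun r (hr : r ∈ S ∧ x r ≠ xl r) =>
      show r ∈ Set.Ioc (0:ℝ) T ∧ x r ≠ xl r from ⟨hSsub hr.1, hr.2⟩)
  set D := {r ∈ S | x r ≠ xl r} with hDdef
  have hDS : D ⊆ S := fun r hr => hr.1
  have hDmeas : MeasurableSet D := hD.measurableSet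
  have hμS : μ S < ⊤ := by
    rw [hS, hμ, StieltjesFunction.measure_Ioc]; exact ENNReal.ofReal_lt_top
  haveI : IsFiniteMeasure (μ.restrict S) :=
    ⟨by rwa [Measure.restrict_apply_univ]⟩
  set d : ℝ → ℝ := S.indicator (fun r => x r - xl r) with hd
  have hd0 : ∀ r, r ∉ D → d r = 0 := by
    intro r hr
    by_cases hrS : r ∈ S
    · have hxr : x r = xl r := by by_contra hne; exact hr ⟨hrS, hne⟩
      simp [hd, Set.indicator_of_mem hrS, hxr]
    · simp [hd, Set.indicator_of_notMem hrS]
  have hdmeas : Measurable d := measurable_of_countable_support hD hd0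
  have hdbd : ∀ r, |d r| ≤ 2 * M := by
    intro r
    by_cases hrS : r ∈ S
    · rw [hd, Set.indicator_of_mem hrS]
      calc |x r - xl r| ≤ |x r| + |xl r| := abs_sub _ _
      _ ≤ M + M := add_le_add
          (hM r ⟨(hSsub hrS).1.le, (hSsub hrS).2⟩) (hMxl r (hSsub hrS))
      _ = 2 * M := by ring
    · rw [hd, Set.indicator_of_notMem hrS, abs_zero]; positivity
  have hxaesm : AEStronglyMeasurable x (μ.restrict S) := cadlag_aesm hx ⟨ht0, htT⟩ μ
  have hxint : IntegrableOn x S μ := by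
    refine ⟨hxaesm, ?_⟩
    apply HasFiniteIntegral.of_bounded (C := M)
    exact (ae_restrict_iff' hSmeas).2 (ae_of_all _ fun r hr => by
      simpa [Real.norm_eq_abs] using hM r ⟨hr.1.le, hr.2.trans htT⟩)
  have hdint : IntegrableOn d S μ :=
    ⟨hdmeas.aestronglyMeasurable, HasFiniteIntegral.of_bounded (C := 2*M)
      (ae_of_all _ fun r => by simpa [Real.norm_eq_abs] using hdbd r)⟩
  have hxleq : xl =ᵐ[μ.restrict S] fun r => x r - d r := by
    rw [EventuallyEq, ae_restrict_iff' hSmeas]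
    refine ae_of_all _ fun r hr => ?_
    rw [hd, Set.indicator_of_mem hr]; ring
  have hxlint : IntegrableOn xl S μ := (hxint.sub hdint).congr hxleq.symm
  have hsplit : ∫ r in S, x r ∂μ = ∫ r in S, xl r ∂μ + ∫ r in S, d r ∂μ := by
    have h1 : ∫ r in S, x r ∂μ = ∫ r in S, (xl r + d r) ∂μ := by
      apply setIntegral_congr_fun hSmeas
      intro r hr
      show x r = xl r + d r
      rw [hd, Set.indicator_of_mem hr]; ring
    rw [h1, integral_add hxlint hdint]
  have hunion : D ∪ (S \ D) = S := Set.union_diff_cancel hDS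
  have hsplit2 : ∫ r in S, d r ∂μ = ∫ r in D, d r ∂μ := by
    have h1 : ∫ r in S, d r ∂μ = ∫ r in D ∪ (S \ D), d r ∂μ := by rw [hunion]
    have h2 := setIntegral_union (Set.disjoint_sdiff_right) (hSmeas.diff hDmeas)
      (hdint.mono_set hDS) (hdint.mono_set Set.diff_subset) (f := d) (μ := μ)
    have h3 : ∫ r in S \ D, d r ∂μ = 0 := by
      have heq : Set.EqOn d (fun _ => (0:ℝ)) (S \ D) := fun r hr => hd0 r hr.2
      rw [setIntegral_congr_fun (hSmeas.diff hDmeas) heq, integral_zero]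
    rw [h1, h2, h3, add_zero]
  have hjump : ∀ r : ℝ, (μ {r}).toReal = k r - Function.leftLim k r := by
    intro r
    rw [hμ, k.measure_singleton r,
      ENNReal.toReal_ofReal (sub_nonneg.2 (k.mono.leftLim_le le_rfl))]
  have hcount : ∫ r in D, d r ∂μ = ∑' r : D, (μ {(r:ℝ)}).toReal • d ↑r :=
    setIntegral_countable d hD (hdint.mono_set hDS)
  have hgd : ∀ r ∈ D, (μ {r}).toReal • d r = g r := by
    intro r hr
    rw [hd, Set.indicator_of_mem (hDS hr), smul_eq_mul, hjump, hg, mul_comm]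
  have hsuppS : Function.support (S.indicator g) ⊆ S := Set.support_indicator_subset
  have hsupp : Function.support (S.indicator g) ⊆ D := by
    intro r hr
    rw [Function.mem_support] at hr
    by_cases hrS : r ∈ S
    · refine ⟨hrS, fun heq => hr ?_⟩
      rw [Set.indicator_of_mem hrS, hg]; simp [heq]
    · exact absurd (Set.indicator_of_notMem hrS _) hr
  have htsum : ∑' r : S, g ↑r = ∑' r : D, g ↑r := by
    have h1 : ∑' r : S, g ↑r = ∑' r : S, (S.indicator g) ↑r :=
      tsum_congr fun r => (Set.indicator_of_mem r.2 g).symm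
    have h2 : ∑' r : D, g ↑r = ∑' r : D, (S.indicator g) ↑r :=
      tsum_congr fun r => (Set.indicator_of_mem (hDS r.2) g).symm
    rw [h1, h2, tsum_subtype_eq_of_support_subset hsuppS,
      tsum_subtype_eq_of_support_subset hsupp]
  have hsum1 : Summable (fun r : D => (μ {(r:ℝ)}).toReal) := by
    apply ENNReal.summable_toReal
    have hb : ∑' (r : D), μ {(r:ℝ)} = μ (⋃ r ∈ D, {r}) :=
      (measure_biUnion hD
        (fun r _ s _ hrs => by simpa [Set.disjoint_singleton] using hrs)
        (fun b _ => measurableSet_singleton b)).symm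
    rw [hb, Set.biUnion_of_singleton]
    exact ne_top_of_le_ne_top hμS.ne (measure_mono hDS)
  have hgabs : ∀ r ∈ S, |g r| ≤ 2 * M * (μ {r}).toReal := by
    intro r hr
    rw [hg, abs_mul, hjump, abs_of_nonneg (sub_nonneg.2 (k.mono.leftLim_le le_rfl))]
    apply mul_le_mul_of_nonneg_right _ (sub_nonneg.2 (k.mono.leftLim_le le_rfl))
    have := hdbd r
    rwa [hd, Set.indicator_of_mem hr] at this
  have hsum2 : Summable (fun r : D => |g ↑r|) := by
    refine Summable.of_nonneg_of_le (fun r => abs_nonneg _)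
      (fun r => ?_) (hsum1.mul_left (2*M))
    exact hgabs ↑r (hDS r.2)
  have heqind : S.indicator (fun r => |g r|) = D.indicator (fun r => |g r|) := by
    funext r
    by_cases hrD : r ∈ D
    · rw [Set.indicator_of_mem hrD, Set.indicator_of_mem (hDS hrD)]
    · rw [Set.indicator_of_notMem hrD]
      by_cases hrS : r ∈ S
      · rw [Set.indicator_of_mem hrS]
        have hxr : x r = xl r := by by_contra hne; exact hrD ⟨hrS, hne⟩
        simp [hg, hxr]
      · rw [Set.indicator_of_notMem hrS]
  refine ⟨hD.mono (fun r (hr : r ∈ S ∧ g r ≠ 0) =>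
    show r ∈ S ∧ x r ≠ xl r from
    ⟨hr.1, fun heq => hr.2 (by rw [hg]; simp [heq])⟩), ?_, ?_⟩
  · have h2 : Summable (D.indicator (fun r => |g r|)) :=
      summable_subtype_iff_indicator.1 hsum2
    rw [← heqind] at h2
    exact summable_subtype_iff_indicator.2 h2
  · calc ∫ r in S, x r ∂μ = ∫ r in S, xl r ∂μ + ∫ r in S, d r ∂μ := hsplit
    _ = ∫ r in S, xl r ∂μ + ∑' r : D, (μ {(r:ℝ)}).toReal • d ↑r := by rw [hsplit2, hcount]
    _ = ∫ r in S, xl r ∂μ + ∑' r : D, g ↑r := by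
        rw [tsum_congr (fun r : D => hgd ↑r r.2)]
    _ = ∫ r in S, xl r ∂μ + ∑' r : S, g ↑r := by rw [htsum]
end

section
/- Let ℓ and k be Stieltjes functions with associated Lebesgue–Stieltjes measures μ_ℓ and μ_k. Then for every t > 0, ∫_{(0,t]} ℓ(r) μ_k(dr) + ∫_{(0,t]} k(r) μ_ℓ(dr) = ℓ(t) k(t) − ℓ(0) k(0) + Σ_{r ∈ (0,t]} (ℓ(r) − ℓ(r−)) (k(r) − k(r−)), where the sum has at most countably many nonzero terms and is absolutely convergent. -/
open Filter Topology MeasureTheory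

/-- Integration by parts for two Stieltjes functions `ℓ, k` (with Lebesgue–Stieltjes
measures `ℓ.measure`, `k.measure`): for every `t > 0`,
`∫_{(0,t]} ℓ dk + ∫_{(0,t]} k dℓ = ℓ(t)k(t) - ℓ(0)k(0) + Σ_{r ∈ (0,t]} Δℓ(r) Δk(r)`,
where the jump sum has countably many nonzero terms and is absolutely convergent. -/
theorem stieltjes_integration_by_parts (l k : StieltjesFunction ℝ) (t : ℝ) (ht : 0 < t) :
    {r ∈ Set.Ioc (0 : ℝ) t |
      (l r - Function.leftLim l r) * (k r - Function.leftLim k r) ≠ 0}.Countable ∧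
    Summable (fun r : Set.Ioc (0 : ℝ) t =>
      |(l r - Function.leftLim l r) * (k r - Function.leftLim k r)|) ∧
    (∫ r in Set.Ioc (0 : ℝ) t, l r ∂k.measure) +
        (∫ r in Set.Ioc (0 : ℝ) t, k r ∂l.measure) =
      l t * k t - l 0 * k 0 +
        ∑' r : Set.Ioc (0 : ℝ) t,
          (l r - Function.leftLim l r) * (k r - Function.leftLim k r) := by
  set s : Set ℝ := Set.Ioc (0 : ℝ) t with hs_def
  have hsm : MeasurableSet s := measurableSet_Ioc
  have hjl : ∀ x : ℝ, 0 ≤ l x - Function.leftLim l x := fun x =>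
    sub_nonneg.2 (l.mono.leftLim_le le_rfl)
  have hjk : ∀ x : ℝ, 0 ≤ k x - Function.leftLim k x := fun x =>
    sub_nonneg.2 (k.mono.leftLim_le le_rfl)
  -- jump function in ℝ≥0∞
  set f : ℝ → ENNReal := fun r => l.measure {r} * k.measure {r} with hf_def
  have hf_eq : ∀ r : ℝ, (f r).toReal
      = (l r - Function.leftLim l r) * (k r - Function.leftLim k r) := fun r => by
    simp only [hf_def, StieltjesFunction.measure_singleton]
    rw [ENNReal.toReal_mul, ENNReal.toReal_ofReal (hjl r), ENNReal.toReal_ofReal (hjk r)]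
  have hf_ne_top : ∀ r : ℝ, f r ≠ ⊤ := fun r => by
    simp only [hf_def, StieltjesFunction.measure_singleton]
    exact ENNReal.mul_ne_top ENNReal.ofReal_ne_top ENNReal.ofReal_ne_top
  -- restricted measures and their product
  set νl := l.measure.restrict s with hνl_def
  set νk := k.measure.restrict s with hνk_def
  haveI h1 : IsFiniteMeasure νl := ⟨by
    rw [hνl_def, Measure.restrict_apply_univ, hs_def, l.measure_Ioc]
    exact ENNReal.ofReal_lt_top⟩
  haveI h2 : IsFiniteMeasure νk := ⟨by
    rw [hνk_def, Measure.restrict_apply_univ, hs_def, k.measure_Ioc]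
    exact ENNReal.ofReal_lt_top⟩
  set P := νl.prod νk with hP_def
  set A : Set (ℝ × ℝ) := {p | p.1 ≤ p.2} with hA_def
  set B : Set (ℝ × ℝ) := {p | p.2 ≤ p.1} with hB_def
  have hA : MeasurableSet A := measurableSet_le measurable_fst measurable_snd
  have hB : MeasurableSet B := measurableSet_le measurable_snd measurable_fst
  have hAB_union : A ∪ B = Set.univ := by
    ext p; simp [hA_def, hB_def, le_total]
  have hAB_inter : A ∩ B = {p : ℝ × ℝ | p.1 = p.2} := by
    ext p; simp [hA_def, hB_def, le_antisymm_iff]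
  have hdiag_m : MeasurableSet {p : ℝ × ℝ | p.1 = p.2} :=
    measurableSet_eq_fun measurable_fst measurable_snd
  -- P A
  have hPA : P A = ∫⁻ y in s, ENNReal.ofReal (l y - l 0) ∂k.measure := by
    rw [hP_def, Measure.prod_apply_symm hA]
    refine setLIntegral_congr_fun hsm (fun y hy => ?_)
    have hpre : ((fun x => (x, y)) ⁻¹' A) = Set.Iic y := rfl
    rw [hpre, hνl_def, Measure.restrict_apply measurableSet_Iic]
    have : Set.Iic y ∩ s = Set.Ioc 0 y := by
      rw [hs_def, Set.inter_comm, Set.Ioc_inter_Iic, min_eq_right hy.2]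
    rw [this, l.measure_Ioc]
  -- P B
  have hPB : P B = ∫⁻ x in s, ENNReal.ofReal (k x - k 0) ∂l.measure := by
    rw [hP_def, Measure.prod_apply hB]
    refine setLIntegral_congr_fun hsm (fun x hx => ?_)
    have hpre : (Prod.mk x ⁻¹' B) = Set.Iic x := rfl
    rw [hpre, hνk_def, Measure.restrict_apply measurableSet_Iic]
    have : Set.Iic x ∩ s = Set.Ioc 0 x := by
      rw [hs_def, Set.inter_comm, Set.Ioc_inter_Iic, min_eq_right hx.2]
    rw [this, k.measure_Ioc]
  -- P diagonal
  set D : Set ℝ := {x | Function.leftLim k x ≠ k x} with hD_def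
  have hD : D.Countable := k.countable_leftLim_ne
  have hDm : MeasurableSet D := hD.measurableSet
  have hPdiag : P {p : ℝ × ℝ | p.1 = p.2} = ∑' r : s, f ↑r := by
    rw [hP_def, Measure.prod_apply hdiag_m]
    have step1 : ∫⁻ x, νk (Prod.mk x ⁻¹' {p : ℝ × ℝ | p.1 = p.2}) ∂νl
        = ∫⁻ x in s, k.measure {x} ∂l.measure := by
      refine setLIntegral_congr_fun hsm (fun x hx => ?_)
      have hpre : (Prod.mk x ⁻¹' {p : ℝ × ℝ | p.1 = p.2}) = {x} := by
        ext y; simp [eq_comm]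
      rw [hpre, hνk_def, Measure.restrict_apply (measurableSet_singleton x),
        Set.inter_eq_self_of_subset_left (Set.singleton_subset_iff.2 hx)]
    rw [step1]
    have hsplit : s = (s ∩ D) ∪ (s \ D) := (Set.inter_union_diff s D).symm
    have hzero : ∫⁻ x in s \ D, k.measure {x} ∂l.measure = 0 := by
      rw [setLIntegral_congr_fun (hsm.diff hDm)
        (fun x hx => show k.measure {x} = (0 : ENNReal) by
          rw [k.measure_singleton, of_not_not hx.2, sub_self, ENNReal.ofReal_zero])]
      simp
    have hcount : (s ∩ D).Countable := hD.mono Set.inter_subset_right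
    calc ∫⁻ x in s, k.measure {x} ∂l.measure
        = ∫⁻ x in (s ∩ D) ∪ (s \ D), k.measure {x} ∂l.measure := by rw [← hsplit]
      _ = (∫⁻ x in s ∩ D, k.measure {x} ∂l.measure)
            + ∫⁻ x in s \ D, k.measure {x} ∂l.measure := by
          exact lintegral_union (hsm.diff hDm)
            (Set.disjoint_left.2 fun x hx1 hx2 => hx2.2 hx1.2)
      _ = ∑' x : ↥(s ∩ D), k.measure {(x : ℝ)} * l.measure {(x : ℝ)} := by
          rw [hzero, add_zero, lintegral_countable _ hcount]
      _ = ∑' x : ↥s, k.measure {(x : ℝ)} * l.measure {(x : ℝ)} := by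
          rw [tsum_subtype (s ∩ D) (fun r : ℝ => k.measure {r} * l.measure {r}),
            tsum_subtype s (fun r : ℝ => k.measure {r} * l.measure {r})]
          congr 1
          funext x
          by_cases hxD : x ∈ D
          · by_cases hxs : x ∈ s
            · rw [Set.indicator_of_mem (Set.mem_inter hxs hxD), Set.indicator_of_mem hxs]
            · rw [Set.indicator_of_notMem (fun h => hxs h.1), Set.indicator_of_notMem hxs]
          · have hg0 : k.measure {x} * l.measure {x} = 0 := by
              rw [k.measure_singleton, of_not_not hxD, sub_self, ENNReal.ofReal_zero, zero_mul]
            have hxnot : x ∉ s ∩ D := fun h => hxD h.2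
            rw [Set.indicator_of_notMem hxnot]
            by_cases hxs : x ∈ s
            · rw [Set.indicator_of_mem hxs, hg0]
            · rw [Set.indicator_of_notMem hxs]
      _ = ∑' r : s, f ↑r := tsum_congr fun r => by rw [hf_def]; exact mul_comm _ _
  -- finiteness
  have hPA_ne : P A ≠ ⊤ := measure_ne_top P A
  have hPB_ne : P B ≠ ⊤ := measure_ne_top P B
  have hPuniv_ne : P Set.univ ≠ ⊤ := measure_ne_top P _
  have hPdiag_ne : P {p : ℝ × ℝ | p.1 = p.2} ≠ ⊤ := measure_ne_top P _
  set T : ENNReal := ∑' r : s, f ↑r with hT_def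
  have hT_ne_top : T ≠ ⊤ := hPdiag ▸ hPdiag_ne
  -- countability
  have hcountable : {r ∈ s |
      (l r - Function.leftLim l r) * (k r - Function.leftLim k r) ≠ 0}.Countable := by
    refine Set.Countable.mono ?_ hD
    intro x hx heq
    exact hx.2 (by rw [heq, sub_self, mul_zero])
  -- summability
  have habs : ∀ r : ℝ, |(l r - Function.leftLim l r) * (k r - Function.leftLim k r)|
      = (f r).toReal := fun r => by
    rw [abs_of_nonneg (mul_nonneg (hjl r) (hjk r)), hf_eq]
  have hsummable : Summable (fun r : s =>
      |(l ↑r - Function.leftLim l ↑r) * (k ↑r - Function.leftLim k ↑r)|) := by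
    refine Summable.congr (ENNReal.summable_toReal hT_ne_top) fun r => (habs ↑r).symm
  -- real tsum
  have htsum : ∑' r : s, (l ↑r - Function.leftLim l ↑r) * (k ↑r - Function.leftLim k ↑r)
      = T.toReal := by
    calc ∑' r : s, (l ↑r - Function.leftLim l ↑r) * (k ↑r - Function.leftLim k ↑r)
        = ∑' r : s, (f ↑r).toReal := tsum_congr fun r => (hf_eq ↑r).symm
      _ = T.toReal := (ENNReal.tsum_toReal_eq fun r : s => hf_ne_top ↑r).symm
  -- measure of s
  have hkt : k 0 ≤ k t := k.mono ht.le
  have hlt : l 0 ≤ l t := l.mono ht.le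
  have hμk_s : k.measure s = ENNReal.ofReal (k t - k 0) := by rw [hs_def, k.measure_Ioc]
  have hμl_s : l.measure s = ENNReal.ofReal (l t - l 0) := by rw [hs_def, l.measure_Ioc]
  -- integral of l against dk
  have hIl : IntegrableOn l s k.measure :=
    ((l.mono.monotoneOn _).integrableOn_isCompact (isCompact_Icc (a := (0:ℝ)) (b := t))).mono_set
      Set.Ioc_subset_Icc_self
  have hIk : IntegrableOn k s l.measure :=
    ((k.mono.monotoneOn _).integrableOn_isCompact (isCompact_Icc (a := (0:ℝ)) (b := t))).mono_set
      Set.Ioc_subset_Icc_self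
  have hIcl : IntegrableOn (fun _ : ℝ => l 0) s k.measure :=
    integrableOn_const (by rw [hμk_s]; exact ENNReal.ofReal_ne_top)
  have hIck : IntegrableOn (fun _ : ℝ => k 0) s l.measure :=
    integrableOn_const (by rw [hμl_s]; exact ENNReal.ofReal_ne_top)
  have hintl : ∫ y in s, l y ∂k.measure = (P A).toReal + l 0 * (k t - k 0) := by
    have h1 : ∫ y in s, l y ∂k.measure
        = ∫ y in s, ((l y - l 0) + l 0) ∂k.measure := by simp
    have hIsub : IntegrableOn (fun y : ℝ => l y - l 0) s k.measure := hIl.sub hIcl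
    rw [h1, integral_add hIsub hIcl]
    congr 1
    · rw [integral_eq_lintegral_of_nonneg_ae
        ((ae_restrict_iff' hsm).2 (ae_of_all _ fun y hy => sub_nonneg.2 (l.mono hy.1.le)))
        ((l.mono.measurable.sub measurable_const).aestronglyMeasurable.restrict), hPA]
    · rw [setIntegral_const, measureReal_def, hμk_s, ENNReal.toReal_ofReal (sub_nonneg.2 hkt), smul_eq_mul,
        mul_comm]
  have hintk : ∫ x in s, k x ∂l.measure = (P B).toReal + k 0 * (l t - l 0) := by
    have h1 : ∫ x in s, k x ∂l.measure
        = ∫ x in s, ((k x - k 0) + k 0) ∂l.measure := by simp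
    have hIsub : IntegrableOn (fun x : ℝ => k x - k 0) s l.measure := hIk.sub hIck
    rw [h1, integral_add hIsub hIck]
    congr 1
    · rw [integral_eq_lintegral_of_nonneg_ae
        ((ae_restrict_iff' hsm).2 (ae_of_all _ fun x hx => sub_nonneg.2 (k.mono hx.1.le)))
        ((k.mono.measurable.sub measurable_const).aestronglyMeasurable.restrict), hPB]
    · rw [setIntegral_const, measureReal_def, hμl_s, ENNReal.toReal_ofReal (sub_nonneg.2 hlt), smul_eq_mul,
        mul_comm]
  -- inclusion-exclusion
  have hkey : P Set.univ + P {p : ℝ × ℝ | p.1 = p.2} = P A + P B := by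
    rw [← hAB_union, ← hAB_inter]
    exact measure_union_add_inter A hB
  have hPuniv : (P Set.univ).toReal = (l t - l 0) * (k t - k 0) := by
    rw [hP_def, ← Set.univ_prod_univ, Measure.prod_prod, hνl_def, hνk_def,
      Measure.restrict_apply_univ, Measure.restrict_apply_univ, hμl_s, hμk_s,
      ENNReal.toReal_mul, ENNReal.toReal_ofReal (sub_nonneg.2 hlt),
      ENNReal.toReal_ofReal (sub_nonneg.2 hkt)]
  have h2 : (P A).toReal + (P B).toReal = (l t - l 0) * (k t - k 0) + T.toReal := by
    have h3 := congrArg ENNReal.toReal hkey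
    rw [ENNReal.toReal_add hPuniv_ne hPdiag_ne, ENNReal.toReal_add hPA_ne hPB_ne] at h3
    rw [← h3, hPuniv, hPdiag, hT_def]
  refine ⟨hcountable, hsummable, ?_⟩
  rw [hintl, hintk, htsum]
  linear_combination h2
end

section
/- (Helly–Bray, uniform–pointwise version.) Let T > 0. Let x^n, x : [0,T] → ℝ be continuous with sup_{t ∈ [0,T]} |x^n(t) − x(t)| → 0 as n → ∞. Let k^n, k be Stieltjes functions with sup_{n} (k^n(T) − k^n(0)) < ∞, and let Q ⊆ [0,T) be a set of Lebesgue measure zero such that k^n(t) → k(t) as n → ∞ for every t ∈ [0,T] ∖ Q. Then for all s, t ∈ [0,T] ∖ Q with s ≤ t, ∫_{(s,t]} x^n(r) μ_{k^n}(dr) → ∫_{(s,t]} x(r) μ_k(dr) as n → ∞. -/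
open Filter Topology MeasureTheory

private lemma chain_le_aux (a : ℕ → ℝ) :
    ∀ m : ℕ, (∀ i < m, a i ≤ a (i + 1)) → a 0 ≤ a m
  | 0, _ => le_rfl
  | (m + 1), h =>
      (chain_le_aux a m fun i hi => h i (hi.trans (Nat.lt_succ_self m))).trans
        (h m (Nat.lt_succ_self m))

private lemma integral_Ioc_partition (μ : Measure ℝ) (f : ℝ → ℝ) (a : ℕ → ℝ) :
    ∀ m : ℕ, (∀ i < m, a i ≤ a (i + 1)) →
      MeasureTheory.IntegrableOn f (Set.Ioc (a 0) (a m)) μ →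
      ∫ r in Set.Ioc (a 0) (a m), f r ∂μ
        = ∑ i ∈ Finset.range m, ∫ r in Set.Ioc (a i) (a (i + 1)), f r ∂μ := by
  intro m
  induction m with
  | zero => simp
  | succ m ih =>
    intro hmono hint
    have h0m : a 0 ≤ a m := chain_le_aux a m fun i hi => hmono i (hi.trans (Nat.lt_succ_self m))
    have hmm : a m ≤ a (m + 1) := hmono m (Nat.lt_succ_self m)
    have hsplit : Set.Ioc (a 0) (a m) ∪ Set.Ioc (a m) (a (m + 1)) = Set.Ioc (a 0) (a (m + 1)) :=
      Set.Ioc_union_Ioc_eq_Ioc h0m hmm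
    have hint1 : MeasureTheory.IntegrableOn f (Set.Ioc (a 0) (a m)) μ :=
      hint.mono_set (by rw [← hsplit]; exact Set.subset_union_left)
    have hint2 : MeasureTheory.IntegrableOn f (Set.Ioc (a m) (a (m + 1))) μ :=
      hint.mono_set (by rw [← hsplit]; exact Set.subset_union_right)
    rw [Finset.sum_range_succ,
      ← ih (fun i hi => hmono i (hi.trans (Nat.lt_succ_self m))) hint1,
      ← MeasureTheory.setIntegral_union (Set.Ioc_disjoint_Ioc_of_le le_rfl) measurableSet_Ioc hint1 hint2,
      hsplit]

private lemma abs_integral_sub_sum_le (F : StieltjesFunction ℝ) (f : ℝ → ℝ) (a : ℕ → ℝ)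
    (m : ℕ) (ε : ℝ)
    (hmono : ∀ i < m, a i ≤ a (i + 1))
    (hint : MeasureTheory.IntegrableOn f (Set.Ioc (a 0) (a m)) F.measure)
    (hclose : ∀ i < m, ∀ r ∈ Set.Ioc (a i) (a (i + 1)), |f r - f (a i)| ≤ ε) :
    |∫ r in Set.Ioc (a 0) (a m), f r ∂F.measure
        - ∑ i ∈ Finset.range m, f (a i) * (F (a (i + 1)) - F (a i))|
      ≤ ε * (F (a m) - F (a 0)) := by
  have h0m : a 0 ≤ a m := chain_le_aux a m hmono
  rw [integral_Ioc_partition F.measure f a m hmono hint, ← Finset.sum_sub_distrib]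
  have key : ∀ i < m,
      |∫ r in Set.Ioc (a i) (a (i + 1)), f r ∂F.measure
          - f (a i) * (F (a (i + 1)) - F (a i))|
        ≤ ε * (F (a (i + 1)) - F (a i)) := by
    intro i hi
    have hsub : Set.Ioc (a i) (a (i + 1)) ⊆ Set.Ioc (a 0) (a m) := by
      apply Set.Ioc_subset_Ioc
      · exact chain_le_aux a i fun j hj => hmono j (hj.trans_le (Nat.le_of_lt hi))
      · have : ∀ j : ℕ, i + 1 + j ≤ m → a (i + 1) ≤ a (i + 1 + j) := by
          intro j
          induction j with
          | zero => exact fun _ => le_rfl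
          | succ j ihj =>
            intro hj
            refine (ihj (by omega)).trans ?_
            exact hmono (i + 1 + j) (by omega)
        have h2 := this (m - (i + 1)) (by omega)
        rwa [show i + 1 + (m - (i + 1)) = m by omega] at h2
    have hinti : MeasureTheory.IntegrableOn f (Set.Ioc (a i) (a (i + 1))) F.measure :=
      hint.mono_set hsub
    have hmeas : F.measure (Set.Ioc (a i) (a (i + 1))) = ENNReal.ofReal (F (a (i + 1)) - F (a i)) :=
      F.measure_Ioc _ _
    have hfin : F.measure (Set.Ioc (a i) (a (i + 1))) < ⊤ := by
      rw [hmeas]; exact ENNReal.ofReal_lt_top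
    have hnn : 0 ≤ F (a (i + 1)) - F (a i) := sub_nonneg.2 (F.mono (hmono i hi))
    have htoReal : (F.measure (Set.Ioc (a i) (a (i + 1)))).toReal = F (a (i + 1)) - F (a i) := by
      rw [hmeas, ENNReal.toReal_ofReal hnn]
    have hconst : ∫ _ in Set.Ioc (a i) (a (i + 1)), f (a i) ∂F.measure
        = f (a i) * (F (a (i + 1)) - F (a i)) := by
      rw [MeasureTheory.setIntegral_const, measureReal_def, htoReal, smul_eq_mul, mul_comm]
    have hconstint : MeasureTheory.IntegrableOn (fun _ => f (a i))
        (Set.Ioc (a i) (a (i + 1))) F.measure := by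
      apply (MeasureTheory.integrableOn_const_iff (by simp)).2
      right; exact hfin
    rw [← hconst, ← MeasureTheory.integral_sub hinti hconstint]
    calc |∫ r in Set.Ioc (a i) (a (i + 1)), (f r - f (a i)) ∂F.measure|
        ≤ ε * (F.measure (Set.Ioc (a i) (a (i + 1)))).toReal := by
          rw [← Real.norm_eq_abs]
          apply MeasureTheory.norm_setIntegral_le_of_norm_le_const hfin
          intro r hr
          rw [Real.norm_eq_abs]
          exact hclose i hi r hr
      _ = ε * (F (a (i + 1)) - F (a i)) := by rw [htoReal]
  calc |∑ i ∈ Finset.range m,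
        (∫ r in Set.Ioc (a i) (a (i + 1)), f r ∂F.measure
          - f (a i) * (F (a (i + 1)) - F (a i)))|
      ≤ ∑ i ∈ Finset.range m,
          |∫ r in Set.Ioc (a i) (a (i + 1)), f r ∂F.measure
            - f (a i) * (F (a (i + 1)) - F (a i))| := Finset.abs_sum_le_sum_abs _ _
    _ ≤ ∑ i ∈ Finset.range m, ε * (F (a (i + 1)) - F (a i)) := by
        apply Finset.sum_le_sum
        intro i hi
        exact key i (Finset.mem_range.1 hi)
    _ = ε * (F (a m) - F (a 0)) := by
        rw [← Finset.mul_sum, Finset.sum_range_sub (fun j => F (a j))]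

set_option maxHeartbeats 1600000 in
/-- Helly–Bray theorem, uniform–pointwise version: if `xⁿ → x` uniformly on `[0,T]`
(`xⁿ, x` continuous), the Stieltjes functions `kⁿ` have uniformly bounded variation
on `[0,T]`, and `kⁿ(t) → k(t)` for all `t ∈ [0,T]` outside a Lebesgue-null set
`Q ⊆ [0,T)`, then `∫_{(s,t]} xⁿ dkⁿ → ∫_{(s,t]} x dk` for all `s ≤ t` in `[0,T] ∖ Q`. -/
theorem helly_bray_uniform_pointwise (T : ℝ) (hT : 0 < T)
    (xn : ℕ → ℝ → ℝ) (x : ℝ → ℝ)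
    (hxnc : ∀ n, ContinuousOn (xn n) (Set.Icc 0 T)) (hxc : ContinuousOn x (Set.Icc 0 T))
    (hxu : TendstoUniformlyOn xn x atTop (Set.Icc 0 T))
    (kn : ℕ → StieltjesFunction ℝ) (k : StieltjesFunction ℝ)
    (hbd : ∃ M : ℝ, ∀ n, kn n T - kn n 0 ≤ M)
    (Q : Set ℝ) (hQsub : Q ⊆ Set.Ico 0 T) (hQnull : MeasureTheory.volume Q = 0)
    (hkconv : ∀ t ∈ Set.Icc (0 : ℝ) T \ Q, Tendsto (fun n => kn n t) atTop (nhds (k t))) :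
    ∀ s ∈ Set.Icc (0 : ℝ) T \ Q, ∀ t ∈ Set.Icc (0 : ℝ) T \ Q, s ≤ t →
      Tendsto (fun n => ∫ r in Set.Ioc s t, xn n r ∂(kn n).measure) atTop
        (nhds (∫ r in Set.Ioc s t, x r ∂k.measure)) := by
  obtain ⟨M, hM⟩ := hbd
  intro s hs t ht hst
  rcases eq_or_lt_of_le hst with rfl | hlt
  · simp only [Set.Ioc_self, Measure.restrict_empty, integral_zero_measure]
    exact tendsto_const_nhds
  obtain ⟨hs0T, hsQ⟩ := hs
  obtain ⟨ht0T, htQ⟩ := ht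
  have hM0 : 0 ≤ M := le_trans (sub_nonneg.2 ((kn 0).mono hT.le)) (hM 0)
  have hK0 : 0 ≤ k T - k 0 := sub_nonneg.2 (k.mono hT.le)
  set B : ℝ := max M (k T - k 0) with hBdef
  have hB0 : 0 ≤ B := le_trans hM0 (le_max_left _ _)
  have hIccsub : Set.Icc s t ⊆ Set.Icc 0 T := Set.Icc_subset_Icc hs0T.1 ht0T.2
  have hintx : ∀ F : StieltjesFunction ℝ,
      MeasureTheory.IntegrableOn x (Set.Ioc s t) F.measure := fun F =>
    ((hxc.mono hIccsub).integrableOn_compact isCompact_Icc).mono_set Set.Ioc_subset_Icc_self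
  have hintxn : ∀ n, MeasureTheory.IntegrableOn (xn n) (Set.Ioc s t) (kn n).measure := fun n =>
    (((hxnc n).mono hIccsub).integrableOn_compact isCompact_Icc).mono_set Set.Ioc_subset_Icc_self
  -- bound on variations over [s,t]
  have hvarn : ∀ n, kn n t - kn n s ≤ B := fun n =>
    le_trans (by
      have h1 : kn n t ≤ kn n T := (kn n).mono ht0T.2
      have h2 : kn n 0 ≤ kn n s := (kn n).mono hs0T.1
      linarith [hM n]) (le_max_left _ _)
  have hvar : k t - k s ≤ B := le_trans (by
      have h1 : k t ≤ k T := k.mono ht0T.2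
      have h2 : k 0 ≤ k s := k.mono hs0T.1
      linarith) (le_max_right _ _)
  rw [Metric.tendsto_nhds]
  intro ε hε
  set ε₀ : ℝ := ε / (4 * (B + 1)) with hε₀def
  have hε₀ : 0 < ε₀ := by positivity
  -- uniform continuity of x on [0, T]
  obtain ⟨δ, hδ0, hδ⟩ : ∃ δ > 0, ∀ u ∈ Set.Icc (0:ℝ) T, ∀ v ∈ Set.Icc (0:ℝ) T,
      dist u v < δ → dist (x u) (x v) < ε₀ := by
    have huc := isCompact_Icc.uniformContinuousOn_of_continuous hxc
    rw [Metric.uniformContinuousOn_iff] at huc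
    exact huc ε₀ hε₀
  -- choose mesh size
  obtain ⟨m, hm⟩ := exists_nat_gt (2 * (t - s) / δ)
  have hmpos : 0 < (m : ℝ) := lt_trans (div_pos (by linarith) hδ0) hm
  have hm0 : 0 < m := by exact_mod_cast hmpos
  set h : ℝ := (t - s) / m with hhdef
  have hh0 : 0 < h := div_pos (sub_pos.2 hlt) hmpos
  have h2δ : 2 * h < δ := by
    rw [hhdef]
    rw [div_lt_iff₀ hδ0] at hm
    rw [← mul_div_assoc, div_lt_iff₀ hmpos]
    nlinarith
  have hts : t = s + m * h := by
    rw [hhdef]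
    field_simp
    ring
  -- choose partition points outside Q
  have hex : ∀ i : ℕ, ∃ c : ℝ, c ∈ Set.Icc 0 T \ Q ∧ (i = 0 → c = s) ∧ (m ≤ i → c = t) ∧
      (0 < i → i < m → c ∈ Set.Ioo (s + ((i : ℝ) - 1/2) * h) (s + ((i : ℝ) + 1/2) * h)) := by
    intro i
    rcases Nat.eq_zero_or_pos i with rfl | hi
    · exact ⟨s, ⟨hs0T, hsQ⟩, fun _ => rfl, fun hmi => absurd hmi (by omega),
        fun h0 _ => absurd h0 (lt_irrefl 0)⟩
    rcases le_or_gt m i with him | him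
    · exact ⟨t, ⟨ht0T, htQ⟩, fun h0 => absurd h0 (by omega), fun _ => rfl,
        fun _ hlt' => absurd hlt' (by omega)⟩
    · have hne : ∃ c ∈ Set.Ioo (s + ((i : ℝ) - 1/2) * h) (s + ((i : ℝ) + 1/2) * h), c ∉ Q := by
        by_contra hcon
        push_neg at hcon
        have hsubQ : Set.Ioo (s + ((i : ℝ) - 1/2) * h) (s + ((i : ℝ) + 1/2) * h) ⊆ Q := hcon
        have hle := measure_mono (μ := volume) hsubQ
        rw [hQnull, Real.volume_Ioo] at hle
        have : (s + ((i : ℝ) + 1/2) * h) - (s + ((i : ℝ) - 1/2) * h) = h := by ring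
        rw [this] at hle
        have : (0 : ENNReal) < ENNReal.ofReal h := ENNReal.ofReal_pos.2 hh0
        exact absurd (le_antisymm hle bot_le) (ne_of_gt this)
      obtain ⟨c, hcI, hcQ⟩ := hne
      have hi1 : (1 : ℝ) ≤ (i : ℝ) := by exact_mod_cast hi
      have him1 : (i : ℝ) + 1 ≤ (m : ℝ) := by exact_mod_cast him
      refine ⟨c, ⟨?_, hcQ⟩, fun h0 => absurd h0 (by omega), fun hmi => absurd hmi (by omega),
        fun _ _ => hcI⟩
      constructor
      · have : s < c := by nlinarith [hcI.1]
        linarith [hs0T.1]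
      · have : c < t := by nlinarith [hcI.2, hts]
        linarith [ht0T.2]
  choose a haQ ha0' ham' haIoo using hex
  have ha0 : a 0 = s := ha0' 0 rfl
  have ham : a m = t := ham' m le_rfl
  -- step properties
  have hstep : ∀ i < m, a i < a (i + 1) ∧ a (i + 1) - a i < δ := by
    intro i hi
    rcases Nat.eq_zero_or_pos i with rfl | hipos
    · rcases eq_or_lt_of_le (Nat.one_le_iff_ne_zero.2 (by omega) : 1 ≤ m) with hm1 | hm1
      · -- m = 1 : a 0 = s, a 1 = t
        have ha1 : a 1 = t := ham' 1 (by omega)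
        rw [ha0, ha1]
        constructor
        · exact hlt
        · have hm1' : (m : ℝ) = 1 := by exact_mod_cast hm1.symm
          nlinarith [hts, h2δ, hh0]
      · have hIoo := haIoo 1 (by omega) (by omega)
        rw [ha0]
        push_cast at hIoo
        constructor
        · nlinarith [hIoo.1]
        · nlinarith [hIoo.2]
    rcases eq_or_lt_of_le (Nat.succ_le_of_lt hi) with hi1m | hi1m
    · -- i + 1 = m
      have haim : a (i + 1) = t := ham' (i + 1) (by omega)
      have hIoo := haIoo i hipos hi
      rw [haim]
      have hicast : ((i : ℝ) + 1) = ((m : ℝ)) := by exact_mod_cast hi1m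
      constructor
      · nlinarith [hIoo.2, hts]
      · nlinarith [hIoo.1, hts]
    · -- i + 1 < m
      have hIoo := haIoo i hipos hi
      have hIoo1 := haIoo (i + 1) (by omega) hi1m
      push_cast at hIoo1
      constructor
      · nlinarith [hIoo.2, hIoo1.1]
      · nlinarith [hIoo.1, hIoo1.2]
  have hmono : ∀ i < m, a i ≤ a (i + 1) := fun i hi => (hstep i hi).1.le
  -- closeness of x to its value at left endpoints
  have hclosex : ∀ i < m, ∀ r ∈ Set.Ioc (a i) (a (i + 1)), |x r - x (a i)| ≤ ε₀ := by
    intro i hi r hr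
    have hai : a i ∈ Set.Icc (0:ℝ) T := (haQ i).1
    have hai1 : a (i + 1) ∈ Set.Icc (0:ℝ) T := (haQ (i + 1)).1
    have hrT : r ∈ Set.Icc (0:ℝ) T := ⟨le_trans hai.1 hr.1.le, le_trans hr.2 hai1.2⟩
    have hd : dist r (a i) < δ := by
      rw [Real.dist_eq, abs_of_pos (sub_pos.2 hr.1)]
      linarith [(hstep i hi).2, hr.2]
    have := hδ r hrT (a i) hai hd
    rw [Real.dist_eq] at this
    exact this.le
  -- partition sums
  set Sn : ℕ → ℝ := fun n => ∑ i ∈ Finset.range m, x (a i) * (kn n (a (i + 1)) - kn n (a i))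
    with hSndef
  set S : ℝ := ∑ i ∈ Finset.range m, x (a i) * (k (a (i + 1)) - k (a i)) with hSdef
  have hSconv : Tendsto Sn atTop (𝓝 S) := by
    apply tendsto_finset_sum
    intro i _
    exact tendsto_const_nhds.mul ((hkconv _ (haQ (i + 1))).sub (hkconv _ (haQ i)))
  -- integrability on Ioc (a 0) (a m)
  have hintx' : ∀ F : StieltjesFunction ℝ,
      MeasureTheory.IntegrableOn x (Set.Ioc (a 0) (a m)) F.measure := by
    intro F; rw [ha0, ham]; exact hintx F
  -- step function approximation, for kn n
  have hJS : ∀ n, |∫ r in Set.Ioc s t, x r ∂(kn n).measure - Sn n| ≤ ε₀ * B := by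
    intro n
    have := abs_integral_sub_sum_le (kn n) x a m ε₀ hmono (hintx' (kn n)) hclosex
    rw [ha0, ham] at this
    refine this.trans ?_
    exact mul_le_mul_of_nonneg_left (hvarn n) hε₀.le
  -- step function approximation, for k
  have hS : |∫ r in Set.Ioc s t, x r ∂k.measure - S| ≤ ε₀ * B := by
    have := abs_integral_sub_sum_le k x a m ε₀ hmono (hintx' k) hclosex
    rw [ha0, ham] at this
    refine this.trans ?_
    exact mul_le_mul_of_nonneg_left hvar hε₀.le
  -- uniform convergence part
  have hunif : ∀ᶠ n in atTop, ∀ r ∈ Set.Icc (0:ℝ) T, dist (x r) (xn n r) < ε₀ :=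
    Metric.tendstoUniformlyOn_iff.1 hxu ε₀ hε₀
  have hSev : ∀ᶠ n in atTop, |Sn n - S| < ε₀ := by
    have := Metric.tendsto_nhds.1 hSconv ε₀ hε₀
    filter_upwards [this] with n hn
    rw [Real.dist_eq] at hn
    exact hn
  filter_upwards [hunif, hSev] with n hn hSn
  rw [Real.dist_eq]
  -- bound |∫ xn n - ∫ x| wrt (kn n).measure
  have e1 : |∫ r in Set.Ioc s t, xn n r ∂(kn n).measure
      - ∫ r in Set.Ioc s t, x r ∂(kn n).measure| ≤ ε₀ * B := by
    rw [← MeasureTheory.integral_sub (hintxn n) (hintx (kn n))]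
    have hfin : (kn n).measure (Set.Ioc s t) < ⊤ := by
      rw [(kn n).measure_Ioc]; exact ENNReal.ofReal_lt_top
    have htoReal : ((kn n).measure (Set.Ioc s t)).toReal = kn n t - kn n s := by
      rw [(kn n).measure_Ioc, ENNReal.toReal_ofReal (sub_nonneg.2 ((kn n).mono hst))]
    calc |∫ r in Set.Ioc s t, (xn n r - x r) ∂(kn n).measure|
        ≤ ε₀ * ((kn n).measure (Set.Ioc s t)).toReal := by
          rw [← Real.norm_eq_abs]
          apply MeasureTheory.norm_setIntegral_le_of_norm_le_const hfin
          intro r hr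
          have hrT : r ∈ Set.Icc (0:ℝ) T :=
            ⟨le_trans hs0T.1 hr.1.le, le_trans hr.2 ht0T.2⟩
          have := hn r hrT
          rw [Real.dist_eq] at this
          rw [Real.norm_eq_abs, abs_sub_comm]
          exact this.le
      _ ≤ ε₀ * B := by
          rw [htoReal]
          exact mul_le_mul_of_nonneg_left (hvarn n) hε₀.le
  -- combine
  have hsplit : ∫ r in Set.Ioc s t, xn n r ∂(kn n).measure
      - ∫ r in Set.Ioc s t, x r ∂k.measure
      = (∫ r in Set.Ioc s t, xn n r ∂(kn n).measure
          - ∫ r in Set.Ioc s t, x r ∂(kn n).measure)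
        + (∫ r in Set.Ioc s t, x r ∂(kn n).measure - Sn n)
        + (Sn n - S)
        + (S - ∫ r in Set.Ioc s t, x r ∂k.measure) := by ring
  rw [hsplit]
  have habs : |(∫ r in Set.Ioc s t, xn n r ∂(kn n).measure
          - ∫ r in Set.Ioc s t, x r ∂(kn n).measure)
        + (∫ r in Set.Ioc s t, x r ∂(kn n).measure - Sn n)
        + (Sn n - S)
        + (S - ∫ r in Set.Ioc s t, x r ∂k.measure)|
      ≤ |∫ r in Set.Ioc s t, xn n r ∂(kn n).measure
          - ∫ r in Set.Ioc s t, x r ∂(kn n).measure|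
        + |∫ r in Set.Ioc s t, x r ∂(kn n).measure - Sn n|
        + |Sn n - S|
        + |S - ∫ r in Set.Ioc s t, x r ∂k.measure| := by
    calc _ ≤ |(∫ r in Set.Ioc s t, xn n r ∂(kn n).measure
          - ∫ r in Set.Ioc s t, x r ∂(kn n).measure)
        + (∫ r in Set.Ioc s t, x r ∂(kn n).measure - Sn n)
        + (Sn n - S)| + |S - ∫ r in Set.Ioc s t, x r ∂k.measure| := abs_add_le _ _
      _ ≤ _ := by
          gcongr ?_ + _
          calc _ ≤ |(∫ r in Set.Ioc s t, xn n r ∂(kn n).measure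
              - ∫ r in Set.Ioc s t, x r ∂(kn n).measure)
            + (∫ r in Set.Ioc s t, x r ∂(kn n).measure - Sn n)| + |Sn n - S| := abs_add_le _ _
            _ ≤ _ := by gcongr ?_ + _; exact abs_add_le _ _
  have hSabs : |S - ∫ r in Set.Ioc s t, x r ∂k.measure| ≤ ε₀ * B := by
    rw [abs_sub_comm]; exact hS
  have hεeq : ε = ε₀ * (4 * (B + 1)) := by
    rw [hε₀def]
    field_simp
  refine lt_of_le_of_lt habs ?_
  nlinarith [hε₀, hB0, e1, hJS n, hSn, hSabs, hεeq, mul_nonneg hε₀.le hB0]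
end

section
/- (Helly–Bray, uniform–uniform version.) Let T > 0. Let x^n, x : [0,T] → ℝ be càdlàg with sup_{t ∈ [0,T]} |x^n(t) − x(t)| → 0 as n → ∞. Let k^n, k be Stieltjes functions with sup_n (k^n(T) − k^n(0)) < ∞ and sup_{t ∈ [0,T]} |k^n(t) − k(t)| → 0 as n → ∞. Then for all 0 ≤ s ≤ t ≤ T, ∫_{(s,t]} x^n(r) μ_{k^n}(dr) → ∫_{(s,t]} x(r) μ_k(dr) as n → ∞. -/
open Filter Topology MeasureTheory

lemma cadlag_tendsto_icc {T : ℝ} {x : ℝ → ℝ} (hx : Cadlag T x) {r : ℝ}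
    (hr : r ∈ Set.Icc (0 : ℝ) T) : Tendsto x (nhdsWithin r (Set.Icc r T)) (nhds (x r)) := by
  rcases eq_or_lt_of_le hr.2 with h | h
  · subst h
    rw [Set.Icc_self, nhdsWithin_singleton]
    exact tendsto_pure_nhds x r
  · rw [← Set.Ioc_insert_left hr.2, nhdsWithin_insert, Filter.tendsto_sup]
    exact ⟨tendsto_pure_nhds x r, hx.1 r ⟨hr.1, h⟩⟩

lemma cadlag_bounded {T : ℝ} {x : ℝ → ℝ} (hx : Cadlag T x) :
    ∃ C : ℝ, ∀ r ∈ Set.Icc (0:ℝ) T, |x r| ≤ C := by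
  have loc : ∀ r ∈ Set.Icc (0:ℝ) T, ∃ C : ℝ, ∀ᶠ y in nhds r, y ∈ Set.Icc (0:ℝ) T → |x y| ≤ C := by
    intro r hr
    have hright : ∃ C : ℝ, ∀ᶠ y in nhds r, y ∈ Set.Ioc r T → |x y| ≤ C := by
      rcases eq_or_lt_of_le hr.2 with h | h
      · subst h
        exact ⟨0, Filter.Eventually.of_forall fun y hy => absurd hy.2 (not_le.mpr hy.1)⟩
      · have h1 : ∀ᶠ y in nhdsWithin r (Set.Ioc r T), |x y| ≤ |x r| + 1 :=
          ((hx.1 r ⟨hr.1, h⟩).abs.eventually_lt_const (lt_add_one _)).mono fun y hy => hy.le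
        rw [eventually_nhdsWithin_iff] at h1
        exact ⟨|x r| + 1, h1⟩
    have hleft : ∃ C : ℝ, ∀ᶠ y in nhds r, y ∈ Set.Ico 0 r → |x y| ≤ C := by
      rcases eq_or_lt_of_le hr.1 with h | h
      · exact ⟨0, Filter.Eventually.of_forall fun y hy => absurd hy.1 (not_le.mpr (h ▸ hy.2))⟩
      · obtain ⟨L, hL⟩ := hx.2 r ⟨h, hr.2⟩
        have h1 : ∀ᶠ y in nhdsWithin r (Set.Ico 0 r), |x y| ≤ |L| + 1 :=
          (hL.abs.eventually_lt_const (lt_add_one _)).mono fun y hy => hy.le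
        rw [eventually_nhdsWithin_iff] at h1
        exact ⟨|L| + 1, h1⟩
    obtain ⟨C1, h1⟩ := hright
    obtain ⟨C2, h2⟩ := hleft
    refine ⟨max (max C1 C2) |x r|, ?_⟩
    filter_upwards [h1, h2] with y hy1 hy2 hy
    rcases lt_trichotomy y r with h | h | h
    · exact (hy2 ⟨hy.1, h⟩).trans ((le_max_right C1 C2).trans (le_max_left _ _))
    · subst h; exact le_max_right _ _
    · exact (hy1 ⟨h, hy.2⟩).trans ((le_max_left C1 C2).trans (le_max_left _ _))
  choose C hC using loc
  obtain ⟨t, ht⟩ := (isCompact_Icc : IsCompact (Set.Icc (0:ℝ) T)).elim_nhds_subcover'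
      (fun r hr => {y | y ∈ Set.Icc (0:ℝ) T → |x y| ≤ C r hr}) (fun r hr => hC r hr)
  refine ⟨∑ r ∈ t, |C r r.2|, ?_⟩
  intro y hy
  obtain ⟨r, hrt, hry⟩ : ∃ r ∈ t, y ∈ {z | z ∈ Set.Icc (0:ℝ) T → |x z| ≤ C r r.2} := by
    simpa using ht hy
  calc |x y| ≤ C r r.2 := hry hy
    _ ≤ |C r r.2| := le_abs_self _
    _ ≤ ∑ r ∈ t, |C r r.2| := Finset.single_le_sum (f := fun (z : ↥(Set.Icc (0:ℝ) T)) => |C z z.2|) (fun i _ => abs_nonneg _) hrt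

lemma cadlag_aemeasurable {T : ℝ} {x : ℝ → ℝ} (hx : Cadlag T x)
    {s t : ℝ} (hs : 0 ≤ s) (ht : t ≤ T) (μ : Measure ℝ) :
    AEMeasurable x (μ.restrict (Set.Ioc s t)) := by
  set φ : ℕ → ℝ → ℝ := fun m r => min ((⌈r * 2 ^ m⌉ : ℤ) / 2 ^ m) t with hφ
  have hmeas : ∀ m, Measurable (fun r => x (φ m r)) := by
    intro m
    have : (fun r => x (φ m r))
        = (fun j : ℤ => x (min ((j : ℝ) / 2 ^ m) t)) ∘ (fun r : ℝ => ⌈r * 2 ^ m⌉) := rfl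
    rw [this]
    exact (measurable_of_countable _).comp ((measurable_id.mul_const _).ceil)
  apply aemeasurable_of_tendsto_metrizable_ae atTop (fun m => (hmeas m).aemeasurable)
  refine (ae_restrict_iff' measurableSet_Ioc).mpr (Filter.Eventually.of_forall fun r hr => ?_)
  have hr0 : 0 ≤ r := hs.trans hr.1.le
  have hrT : r ≤ T := hr.2.trans ht
  have key : Tendsto x (nhdsWithin r (Set.Icc r T)) (nhds (x r)) :=
    cadlag_tendsto_icc hx ⟨hr0, hrT⟩
  apply key.comp
  apply tendsto_nhdsWithin_of_tendsto_nhds_of_eventually_within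
  · have hle : ∀ m : ℕ, r ≤ ((⌈r * 2 ^ m⌉ : ℤ) : ℝ) / 2 ^ m := by
      intro m
      rw [le_div_iff₀ (by positivity)]
      exact Int.le_ceil _
    have hub : ∀ m : ℕ, ((⌈r * 2 ^ m⌉ : ℤ) : ℝ) / 2 ^ m ≤ r + (1/2 : ℝ) ^ m := by
      intro m
      rw [div_le_iff₀ (by positivity)]
      have h1 : ((⌈r * 2 ^ m⌉ : ℤ) : ℝ) ≤ r * 2 ^ m + 1 := (Int.ceil_lt_add_one _).le
      have h2 : ((1:ℝ)/2) ^ m * 2 ^ m = 1 := by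
        rw [← mul_pow]; norm_num
      nlinarith
    have h1 : Tendsto (fun m : ℕ => ((⌈r * 2 ^ m⌉ : ℤ) : ℝ) / 2 ^ m) atTop (nhds r) := by
      apply tendsto_of_tendsto_of_tendsto_of_le_of_le (g := fun _ => r)
        (h := fun m => r + (1/2 : ℝ) ^ m) tendsto_const_nhds ?_ hle hub
      have := tendsto_pow_atTop_nhds_zero_of_lt_one (r := (1/2 : ℝ)) (by norm_num) (by norm_num)
      simpa using tendsto_const_nhds.add this
    have := h1.min (tendsto_const_nhds (x := t))
    rw [min_eq_left hr.2] at this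
    exact this
  · refine Filter.Eventually.of_forall fun m => ⟨?_, ?_⟩
    · refine le_min ?_ hr.2
      rw [le_div_iff₀ (by positivity)]
      exact Int.le_ceil _
    · exact (min_le_right _ _).trans ht

lemma cadlag_integrableOn {T : ℝ} {x : ℝ → ℝ} (hx : Cadlag T x) (k : StieltjesFunction ℝ)
    {s t : ℝ} (hs : 0 ≤ s) (ht : t ≤ T) :
    MeasureTheory.IntegrableOn x (Set.Ioc s t) k.measure := by
  obtain ⟨C, hC⟩ := cadlag_bounded hx
  have hfin : k.measure (Set.Ioc s t) < ⊤ := by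
    rw [StieltjesFunction.measure_Ioc]; exact ENNReal.ofReal_lt_top
  refine Integrable.mono' (g := fun _ => C) (integrableOn_const hfin.ne)
    ((cadlag_aemeasurable hx hs ht k.measure).aestronglyMeasurable) ?_
  refine (ae_restrict_iff' measurableSet_Ioc).mpr (Filter.Eventually.of_forall fun r hr => ?_)
  rw [Real.norm_eq_abs]
  exact hC r ⟨hs.trans hr.1.le, hr.2.trans ht⟩

lemma leftLim_sub_le {f g : StieltjesFunction ℝ} {T v u' : ℝ} (hu0 : 0 < u') (huT : u' ≤ T)
    (h : ∀ p ∈ Set.Icc (0:ℝ) T, |f p - g p| ≤ v) :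
    |Function.leftLim f u' - Function.leftLim g u'| ≤ v := by
  have hf := f.mono.tendsto_leftLim u'
  have hg := g.mono.tendsto_leftLim u'
  have habs : Tendsto (fun r => |f r - g r|) (nhdsWithin u' (Set.Iio u'))
      (nhds |Function.leftLim (⇑f) u' - Function.leftLim (⇑g) u'|) := (hf.sub hg).abs
  refine le_of_tendsto habs ?_
  filter_upwards [Ioo_mem_nhdsLT_of_mem (show u' ∈ Set.Ioc 0 u' from ⟨hu0, le_refl u'⟩)] with r hr
  exact h r ⟨hr.1.le, hr.2.le.trans huT⟩

lemma integrableOn_jump (f : StieltjesFunction ℝ) (u u' L c : ℝ) :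
    MeasureTheory.IntegrableOn (fun r => L + Set.indicator {u'} (fun _ => c) r)
      (Set.Ioc u u') f.measure := by
  have hfin : f.measure (Set.Ioc u u') < ⊤ := by
    rw [StieltjesFunction.measure_Ioc]; exact ENNReal.ofReal_lt_top
  exact (integrableOn_const hfin.ne).add
    ((integrableOn_const (C := c) hfin.ne).indicator (measurableSet_singleton u'))

lemma stieltjes_integral_jump (f : StieltjesFunction ℝ) {u u' : ℝ} (h : u < u') (L c : ℝ) :
    ∫ r in Set.Ioc u u', (L + Set.indicator {u'} (fun _ => c) r) ∂f.measure
      = L * (f u' - f u) + c * (f u' - Function.leftLim f u') := by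
  have hfin : f.measure (Set.Ioc u u') < ⊤ := by
    rw [StieltjesFunction.measure_Ioc]; exact ENNReal.ofReal_lt_top
  rw [integral_add (integrableOn_const (C := L) hfin.ne)
    ((integrableOn_const (C := c) hfin.ne).indicator (measurableSet_singleton u'))]
  rw [setIntegral_const, setIntegral_indicator (measurableSet_singleton u')]
  have hinter : Set.Ioc u u' ∩ {u'} = {u'} :=
    Set.inter_eq_self_of_subset_right (Set.singleton_subset_iff.mpr ⟨h, le_refl _⟩)
  rw [hinter, setIntegral_const]
  rw [measureReal_def, measureReal_def, StieltjesFunction.measure_Ioc, StieltjesFunction.measure_singleton]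
  rw [ENNReal.toReal_ofReal (sub_nonneg.mpr (f.mono h.le)),
    ENNReal.toReal_ofReal (sub_nonneg.mpr (f.mono.leftLim_le (le_refl u')))]
  simp [mul_comm]

lemma helly_step (T : ℝ)
    (xn : ℕ → ℝ → ℝ) (x : ℝ → ℝ)
    (hxnc : ∀ n, Cadlag T (xn n)) (hxc : Cadlag T x)
    (hxu : TendstoUniformlyOn xn x atTop (Set.Icc 0 T))
    (kn : ℕ → StieltjesFunction ℝ) (k : StieltjesFunction ℝ)
    (hku : TendstoUniformlyOn (fun n t => kn n t) (fun t => k t) atTop (Set.Icc 0 T))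
    {u u' : ℝ} (hu0 : 0 ≤ u) (huu : u ≤ u') (hu'T : u' ≤ T)
    {ε : ℝ} (hε : 0 < ε) (L : ℝ)
    (hL : ∀ r ∈ Set.Ioo u u', |x r - L| ≤ ε) :
    ∀ η > 0, ∀ᶠ n in atTop,
      |(∫ r in Set.Ioc u u', xn n r ∂(kn n).measure) - ∫ r in Set.Ioc u u', x r ∂k.measure|
        ≤ 2 * ε * (k u' - k u) + η := by
  intro η hη
  rcases eq_or_lt_of_le huu with h | hlt
  · subst h
    refine Filter.Eventually.of_forall fun n => ?_
    simp only [Set.Ioc_self, Measure.restrict_empty, integral_zero_measure, sub_self, abs_zero]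
    positivity
  set A := k u' - k u with hA
  have hA0 : 0 ≤ A := sub_nonneg.mpr (k.mono huu)
  set w := η / (2 * (A + 1)) with hw
  have hw0 : 0 < w := by positivity
  set D := w + ε + |L| + |x u' - L| with hD
  have hD0 : 0 < D := by positivity
  set v := η / (4 * (D + 1)) with hv
  have hv0 : 0 < v := by positivity
  have e1 : w * (2 * (A + 1)) = η := by rw [hw]; field_simp
  have e2 : v * (4 * (D + 1)) = η := by rw [hv]; field_simp
  have e1' : 2 * (w * A) + 2 * w = η := by linear_combination e1
  have e2' : 4 * (v * D) + 4 * v = η := by linear_combination e2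
  clear_value A w D v
  filter_upwards [Metric.tendstoUniformlyOn_iff.mp hxu w hw0,
    Metric.tendstoUniformlyOn_iff.mp hku v hv0] with n hxw hkv
  have hxw' : ∀ p ∈ Set.Icc (0:ℝ) T, |xn n p - x p| ≤ w := fun p hp => by
    have := hxw p hp; rw [Real.dist_eq, abs_sub_comm] at this; exact this.le
  have hkv' : ∀ p ∈ Set.Icc (0:ℝ) T, |kn n p - k p| ≤ v := fun p hp => by
    have := hkv p hp; rw [Real.dist_eq, abs_sub_comm] at this; exact this.le
  have humem : u ∈ Set.Icc (0:ℝ) T := ⟨hu0, huu.trans hu'T⟩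
  have hu'mem : u' ∈ Set.Icc (0:ℝ) T := ⟨hu0.trans huu, hu'T⟩
  have hvL : |Function.leftLim (kn n) u' - Function.leftLim k u'| ≤ v :=
    leftLim_sub_le (lt_of_le_of_lt hu0 hlt) hu'T hkv'
  set g : ℝ → ℝ := fun r => L + Set.indicator {u'} (fun _ => x u' - L) r with hg
  have hgx : ∀ r ∈ Set.Ioc u u', |g r - x r| ≤ ε := by
    intro r hr
    rcases eq_or_lt_of_le hr.2 with h | h
    · subst h
      have hgr : g r = x r := by
        simp only [hg, Set.indicator_of_mem (Set.mem_singleton _)]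
        ring
      rw [hgr, sub_self, abs_zero]
      exact hε.le
    · have hne : r ∉ ({u'} : Set ℝ) := by simp [ne_of_lt h]
      have : g r = L := by simp only [hg, Set.indicator_of_notMem hne, add_zero]
      rw [this, abs_sub_comm]
      exact hL r ⟨hr.1, h⟩
  -- integrability
  have IntXn : MeasureTheory.IntegrableOn (xn n) (Set.Ioc u u') (kn n).measure :=
    cadlag_integrableOn (hxnc n) (kn n) hu0 hu'T
  have IntX : MeasureTheory.IntegrableOn x (Set.Ioc u u') k.measure :=
    cadlag_integrableOn hxc k hu0 hu'T
  have Intgn : MeasureTheory.IntegrableOn g (Set.Ioc u u') (kn n).measure :=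
    integrableOn_jump (kn n) u u' L (x u' - L)
  have Intgk : MeasureTheory.IntegrableOn g (Set.Ioc u u') k.measure :=
    integrableOn_jump k u u' L (x u' - L)
  have hfinn : (kn n).measure (Set.Ioc u u') < ⊤ := by
    rw [StieltjesFunction.measure_Ioc]; exact ENNReal.ofReal_lt_top
  have hfink : k.measure (Set.Ioc u u') < ⊤ := by
    rw [StieltjesFunction.measure_Ioc]; exact ENNReal.ofReal_lt_top
  have hmn : ((kn n).measure (Set.Ioc u u')).toReal = kn n u' - kn n u := by
    rw [StieltjesFunction.measure_Ioc, ENNReal.toReal_ofReal (sub_nonneg.mpr ((kn n).mono huu))]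
  have hmk : (k.measure (Set.Ioc u u')).toReal = k u' - k u := by
    rw [StieltjesFunction.measure_Ioc, ENNReal.toReal_ofReal (sub_nonneg.mpr (k.mono huu))]
  -- decomposition
  have key : (∫ r in Set.Ioc u u', xn n r ∂(kn n).measure)
        - ∫ r in Set.Ioc u u', x r ∂k.measure
      = (∫ r in Set.Ioc u u', (xn n r - g r) ∂(kn n).measure)
        + ((∫ r in Set.Ioc u u', g r ∂(kn n).measure)
            - ∫ r in Set.Ioc u u', g r ∂k.measure)
        + (∫ r in Set.Ioc u u', (g r - x r) ∂k.measure) := by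
    rw [integral_sub IntXn Intgn, integral_sub Intgk IntX]
    ring
  -- bound 1
  have b1 : |∫ r in Set.Ioc u u', (xn n r - g r) ∂(kn n).measure|
      ≤ (w + ε) * (kn n u' - kn n u) := by
    have hb : ∀ r ∈ Set.Ioc u u', ‖xn n r - g r‖ ≤ w + ε := by
      intro r hr
      rw [Real.norm_eq_abs]
      have h1 : |xn n r - x r| ≤ w :=
        hxw' r ⟨hu0.trans hr.1.le, hr.2.trans hu'T⟩
      have h2 : |x r - g r| ≤ ε := by rw [abs_sub_comm]; exact hgx r hr
      calc |xn n r - g r| = |(xn n r - x r) + (x r - g r)| := by ring_nf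
        _ ≤ |xn n r - x r| + |x r - g r| := abs_add_le _ _
        _ ≤ w + ε := add_le_add h1 h2
    have := norm_setIntegral_le_of_norm_le_const hfinn hb
    rwa [Real.norm_eq_abs, measureReal_def, hmn] at this
  -- bound 3
  have b3 : |∫ r in Set.Ioc u u', (g r - x r) ∂k.measure| ≤ ε * (k u' - k u) := by
    have hb : ∀ r ∈ Set.Ioc u u', ‖g r - x r‖ ≤ ε := fun r hr => by
      rw [Real.norm_eq_abs]; exact hgx r hr
    have := norm_setIntegral_le_of_norm_le_const hfink hb
    rwa [Real.norm_eq_abs, measureReal_def, hmk] at this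
  -- bound 2
  have hgn : ∫ r in Set.Ioc u u', g r ∂(kn n).measure
      = L * (kn n u' - kn n u) + (x u' - L) * (kn n u' - Function.leftLim (kn n) u') :=
    stieltjes_integral_jump (kn n) hlt L (x u' - L)
  have hgk : ∫ r in Set.Ioc u u', g r ∂k.measure
      = L * (k u' - k u) + (x u' - L) * (k u' - Function.leftLim k u') :=
    stieltjes_integral_jump k hlt L (x u' - L)
  have hvu : |kn n u - k u| ≤ v := hkv' u humem
  have hvu' : |kn n u' - k u'| ≤ v := hkv' u' hu'mem
  have b2 : |(∫ r in Set.Ioc u u', g r ∂(kn n).measure)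
      - ∫ r in Set.Ioc u u', g r ∂k.measure|
      ≤ |L| * (2 * v) + |x u' - L| * (2 * v) := by
    rw [hgn, hgk]
    have e1 : |(kn n u' - kn n u) - (k u' - k u)| ≤ 2 * v := by
      have := abs_sub (kn n u' - k u') (kn n u - k u)
      calc |(kn n u' - kn n u) - (k u' - k u)|
          = |(kn n u' - k u') - (kn n u - k u)| := by ring_nf
        _ ≤ |kn n u' - k u'| + |kn n u - k u| := abs_sub _ _
        _ ≤ 2 * v := by linarith
    have e2 : |(kn n u' - Function.leftLim (kn n) u') - (k u' - Function.leftLim k u')|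
        ≤ 2 * v := by
      calc |(kn n u' - Function.leftLim (kn n) u') - (k u' - Function.leftLim k u')|
          = |(kn n u' - k u') - (Function.leftLim (kn n) u' - Function.leftLim k u')| := by
            ring_nf
        _ ≤ |kn n u' - k u'| + |Function.leftLim (kn n) u' - Function.leftLim k u'| :=
            abs_sub _ _
        _ ≤ 2 * v := by linarith
    calc |(L * (kn n u' - kn n u) + (x u' - L) * (kn n u' - Function.leftLim (kn n) u'))
          - (L * (k u' - k u) + (x u' - L) * (k u' - Function.leftLim k u'))|
        = |L * ((kn n u' - kn n u) - (k u' - k u))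
            + (x u' - L) * ((kn n u' - Function.leftLim (kn n) u')
              - (k u' - Function.leftLim k u'))| := by ring_nf
      _ ≤ |L * ((kn n u' - kn n u) - (k u' - k u))|
            + |(x u' - L) * ((kn n u' - Function.leftLim (kn n) u')
              - (k u' - Function.leftLim k u'))| := abs_add_le _ _
      _ ≤ |L| * (2 * v) + |x u' - L| * (2 * v) := by
          rw [abs_mul, abs_mul]
          exact add_le_add (mul_le_mul_of_nonneg_left e1 (abs_nonneg _))
            (mul_le_mul_of_nonneg_left e2 (abs_nonneg _))
  -- kn variation bound
  have bA : kn n u' - kn n u ≤ A + 2 * v := by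
    have h1 := abs_le.mp hvu
    have h2 := abs_le.mp hvu'
    rw [hA]; linarith [h1.1, h1.2, h2.1, h2.2]
  have hknn : 0 ≤ kn n u' - kn n u := sub_nonneg.mpr ((kn n).mono huu)
  -- final arithmetic
  calc |(∫ r in Set.Ioc u u', xn n r ∂(kn n).measure)
        - ∫ r in Set.Ioc u u', x r ∂k.measure|
      ≤ |∫ r in Set.Ioc u u', (xn n r - g r) ∂(kn n).measure|
        + |(∫ r in Set.Ioc u u', g r ∂(kn n).measure)
            - ∫ r in Set.Ioc u u', g r ∂k.measure|
        + |∫ r in Set.Ioc u u', (g r - x r) ∂k.measure| := by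
        rw [key]; exact (abs_add_le _ _).trans (add_le_add_left (abs_add_le _ _) _)
    _ ≤ (w + ε) * (kn n u' - kn n u) + (|L| * (2 * v) + |x u' - L| * (2 * v))
        + ε * (k u' - k u) := add_le_add (add_le_add b1 b2) b3
    _ ≤ (w + ε) * (A + 2 * v) + (|L| * (2 * v) + |x u' - L| * (2 * v)) + ε * A := by
        have : (w + ε) * (kn n u' - kn n u) ≤ (w + ε) * (A + 2 * v) :=
          mul_le_mul_of_nonneg_left bA (by linarith)
        rw [hA]; rw [hA] at this; linarith
    _ ≤ 2 * ε * A + η := by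
        have p1 : w * A ≤ η / 2 := by linarith [hw0.le]
        have p2 : 2 * (v * D) ≤ η / 2 := by linarith [hv0.le]
        have expand : (w + ε) * (A + 2 * v) + (|L| * (2 * v) + |x u' - L| * (2 * v)) + ε * A
            = 2 * ε * A + (w * A + 2 * (v * D)) := by rw [hD]; ring
        linarith

/-- Helly–Bray theorem, uniform–uniform version: if the càdlàg functions `xⁿ → x`
uniformly on `[0,T]`, the Stieltjes functions `kⁿ` have uniformly bounded variation on
`[0,T]` and `kⁿ → k` uniformly on `[0,T]`, then `∫_{(s,t]} xⁿ dkⁿ → ∫_{(s,t]} x dk`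
for all `0 ≤ s ≤ t ≤ T`. -/
theorem helly_bray_uniform_uniform (T : ℝ) (hT : 0 < T)
    (xn : ℕ → ℝ → ℝ) (x : ℝ → ℝ)
    (hxnc : ∀ n, Cadlag T (xn n)) (hxc : Cadlag T x)
    (hxu : TendstoUniformlyOn xn x atTop (Set.Icc 0 T))
    (kn : ℕ → StieltjesFunction ℝ) (k : StieltjesFunction ℝ)
    (hbd : ∃ M : ℝ, ∀ n, kn n T - kn n 0 ≤ M)
    (hku : TendstoUniformlyOn (fun n t => kn n t) (fun t => k t) atTop (Set.Icc 0 T)) :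
    ∀ s t : ℝ, 0 ≤ s → s ≤ t → t ≤ T →
      Tendsto (fun n => ∫ r in Set.Ioc s t, xn n r ∂(kn n).measure) atTop
        (nhds (∫ r in Set.Ioc s t, x r ∂k.measure)) := by
  intro s t hs hst htT
  have main : ∀ ε > 0, ∀ η > 0, ∀ᶠ n in atTop,
      |(∫ r in Set.Ioc s t, xn n r ∂(kn n).measure) - ∫ r in Set.Ioc s t, x r ∂k.measure|
        ≤ 2 * ε * (k t - k s) + η := by
    intro ε hε
    set S : Set ℝ := {u | u ∈ Set.Icc s t ∧ ∀ η > 0, ∀ᶠ n in atTop,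
      |(∫ r in Set.Ioc s u, xn n r ∂(kn n).measure) - ∫ r in Set.Ioc s u, x r ∂k.measure|
        ≤ 2 * ε * (k u - k s) + η} with hSdef
    have hsS : s ∈ S := by
      refine ⟨⟨le_refl s, hst⟩, ?_⟩
      intro η hη
      refine Filter.Eventually.of_forall fun n => ?_
      simp only [Set.Ioc_self, Measure.restrict_empty, integral_zero_measure, sub_self,
        abs_zero]
      positivity
    have hbdd : BddAbove S := ⟨t, fun u hu => hu.1.2⟩
    have hne : S.Nonempty := ⟨s, hsS⟩
    -- gluing step
    have glue : ∀ u ∈ S, ∀ u', u ≤ u' → u' ≤ t → ∀ L : ℝ,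
        (∀ r ∈ Set.Ioo u u', |x r - L| ≤ ε) → u' ∈ S := by
      intro u huS u' huu' hu't L hbound
      have hsu : s ≤ u := huS.1.1
      have hu0 : 0 ≤ u := hs.trans hsu
      have huT : u ≤ T := (huu'.trans hu't).trans htT
      have hu'T : u' ≤ T := hu't.trans htT
      refine ⟨⟨hsu.trans huu', hu't⟩, ?_⟩
      intro η hη
      have h1 := huS.2 (η / 2) (by positivity)
      have h2 := helly_step T xn x hxnc hxc hxu kn k hku hu0 huu' hu'T hε L hbound
        (η / 2) (by positivity)
      filter_upwards [h1, h2] with n hn1 hn2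
      have addn : (∫ r in Set.Ioc s u', xn n r ∂(kn n).measure)
          = (∫ r in Set.Ioc s u, xn n r ∂(kn n).measure)
            + ∫ r in Set.Ioc u u', xn n r ∂(kn n).measure := by
        rw [← Set.Ioc_union_Ioc_eq_Ioc hsu huu']
        exact setIntegral_union (Set.Ioc_disjoint_Ioc_of_le le_rfl) measurableSet_Ioc
          (cadlag_integrableOn (hxnc n) (kn n) hs huT)
          (cadlag_integrableOn (hxnc n) (kn n) hu0 hu'T)
      have addk : (∫ r in Set.Ioc s u', x r ∂k.measure)
          = (∫ r in Set.Ioc s u, x r ∂k.measure)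
            + ∫ r in Set.Ioc u u', x r ∂k.measure := by
        rw [← Set.Ioc_union_Ioc_eq_Ioc hsu huu']
        exact setIntegral_union (Set.Ioc_disjoint_Ioc_of_le le_rfl) measurableSet_Ioc
          (cadlag_integrableOn hxc k hs huT)
          (cadlag_integrableOn hxc k hu0 hu'T)
      rw [addn, addk]
      have habs : |((∫ r in Set.Ioc s u, xn n r ∂(kn n).measure)
              + ∫ r in Set.Ioc u u', xn n r ∂(kn n).measure)
            - ((∫ r in Set.Ioc s u, x r ∂k.measure)
              + ∫ r in Set.Ioc u u', x r ∂k.measure)|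
          ≤ |(∫ r in Set.Ioc s u, xn n r ∂(kn n).measure)
              - ∫ r in Set.Ioc s u, x r ∂k.measure|
            + |(∫ r in Set.Ioc u u', xn n r ∂(kn n).measure)
              - ∫ r in Set.Ioc u u', x r ∂k.measure| := by
        have : ((∫ r in Set.Ioc s u, xn n r ∂(kn n).measure)
              + ∫ r in Set.Ioc u u', xn n r ∂(kn n).measure)
            - ((∫ r in Set.Ioc s u, x r ∂k.measure)
              + ∫ r in Set.Ioc u u', x r ∂k.measure)
            = ((∫ r in Set.Ioc s u, xn n r ∂(kn n).measure)
              - ∫ r in Set.Ioc s u, x r ∂k.measure)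
            + ((∫ r in Set.Ioc u u', xn n r ∂(kn n).measure)
              - ∫ r in Set.Ioc u u', x r ∂k.measure) := by ring
        rw [this]
        exact abs_add_le _ _
      refine habs.trans ?_
      have : 2 * ε * (k u - k s) + η / 2 + (2 * ε * (k u' - k u) + η / 2)
          = 2 * ε * (k u' - k s) + η := by ring
      linarith [hn1, hn2]
    set c := sSup S with hcdef
    have hcs : s ≤ c := le_csSup hbdd hsS
    have hct : c ≤ t := csSup_le hne fun u hu => hu.1.2
    have hcS : c ∈ S := by
      rcases eq_or_lt_of_le hcs with h | h
      · rw [← h]; exact hsS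
      · obtain ⟨L, hLt⟩ := hxc.2 c ⟨lt_of_le_of_lt hs h, hct.trans htT⟩
        have hev : ∀ᶠ r in nhdsWithin c (Set.Ico 0 c), |x r - L| ≤ ε :=
          (Metric.tendsto_nhds.mp hLt ε hε).mono fun r hr => by
            rw [Real.dist_eq] at hr; exact hr.le
        rw [eventually_nhdsWithin_iff, Metric.eventually_nhds_iff] at hev
        obtain ⟨δ, hδ0, hδ⟩ := hev
        obtain ⟨u, huS, hub⟩ := exists_lt_of_lt_csSup hne
          (show c - δ / 2 < c by linarith)
        have huc : u ≤ c := le_csSup hbdd huS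
        refine glue u huS c huc hct L fun r hr => ?_
        refine hδ ?_ ⟨(hs.trans huS.1.1).trans hr.1.le, hr.2⟩
        rw [Real.dist_eq, abs_of_neg (by linarith [hr.2] : r - c < 0)]
        have : u < r := hr.1
        linarith
    have hct' : c = t := by
      by_contra hnet
      have hclt : c < t := hct.lt_of_ne hnet
      have hrc := hxc.1 c ⟨hs.trans hcs, lt_of_lt_of_le hclt htT⟩
      have hev : ∀ᶠ r in nhdsWithin c (Set.Ioc c T), |x r - x c| ≤ ε :=
        (Metric.tendsto_nhds.mp hrc ε hε).mono fun r hr => by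
          rw [Real.dist_eq] at hr; exact hr.le
      rw [eventually_nhdsWithin_iff, Metric.eventually_nhds_iff] at hev
      obtain ⟨δ, hδ0, hδ⟩ := hev
      set u' := min t (c + δ / 2) with hu'def
      have hcu' : c < u' := lt_min hclt (by linarith)
      have hu't : u' ≤ t := min_le_left _ _
      have hu'S : u' ∈ S := by
        refine glue c hcS u' hcu'.le hu't (x c) fun r hr => ?_
        have hr1 : c < r := hr.1
        have hr2 : r < u' := hr.2
        have hr3 : r ≤ T := (hr2.le.trans hu't).trans htT
        refine hδ ?_ ⟨hr1, hr3⟩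
        rw [Real.dist_eq, abs_of_pos (by linarith : (0:ℝ) < r - c)]
        have : u' ≤ c + δ / 2 := min_le_right _ _
        linarith
      exact absurd (le_csSup hbdd hu'S) (not_le.mpr hcu')
    rw [hct'] at hcS
    exact hcS.2
  rw [← tendsto_sub_nhds_zero_iff, NormedAddCommGroup.tendsto_nhds_zero]
  intro ε' hε'
  have hks : 0 ≤ k t - k s := sub_nonneg.mpr (k.mono hst)
  have hD : (0:ℝ) < 4 * (k t - k s) + 4 := by linarith
  obtain ⟨ε, hε0, hεe⟩ : ∃ ε : ℝ, 0 < ε ∧ 4 * (ε * (k t - k s)) + 4 * ε = ε' := by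
    refine ⟨ε' / (4 * (k t - k s) + 4), div_pos hε' hD, ?_⟩
    field_simp
  have h := main ε hε0 (ε' / 4) (by positivity)
  filter_upwards [h] with n hn
  rw [Real.norm_eq_abs]
  have h2 : 2 * ε * (k t - k s) ≤ ε' / 2 := by nlinarith
  calc |(∫ r in Set.Ioc s t, xn n r ∂(kn n).measure) - ∫ r in Set.Ioc s t, x r ∂k.measure|
      ≤ 2 * ε * (k t - k s) + ε' / 4 := hn
    _ ≤ ε' / 2 + ε' / 4 := by linarith
    _ < ε' := by linarith
end
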